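/- arXiv:2311.04409 — 7 statements merged into one kernel-verified Lean document; each statement's English description precedes it below -/
import Mathlib

section
/- Let f map a partial order Π on [n] to the set f(Π) = {e_j - e_i : i <_Π j} ⊂ ℝ^n. Then f is a bijection between partial orders on [n] and subsets P of the type-A root system A_n = {e_i - e_j : 1 ≤ i < j ≤ n} ∪ {e_j - e_i : 1 ≤ i < j ≤ n} satisfying: (1) α ∈ P implies -α ∉ P; (2) P is closed under positive linear combinations, i.e., any element of A_n that is a positive linear combination of elements of P lies in P. -/
open Finset Pointwise

noncomputable section
attribute [local instance] Classical.propDecidable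

/-- The `i`-th standard unit vector in `ℝ^n`. -/
def ee (n : ℕ) (i : Fin n) : Fin n → ℝ := fun j => if j = i then 1 else 0

/-- Standard inner product on `ℝ^n`. -/
def dot {n : ℕ} (a x : Fin n → ℝ) : ℝ := ∑ i, a i * x i

/-- The type-B root system `B_n`. -/
def Bn (n : ℕ) : Set (Fin n → ℝ) :=
  {α | (∃ i : Fin n, α = ee n i ∨ α = -ee n i) ∨
       (∃ i j : Fin n, i < j ∧ (α = ee n i + ee n j ∨ α = -ee n i - ee n j ∨
          α = ee n i - ee n j ∨ α = -ee n i + ee n j))}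

/-- The set of positive linear combinations of elements of `S`. -/
def PLC {n : ℕ} (S : Set (Fin n → ℝ)) : Set (Fin n → ℝ) :=
  {β | ∃ (m : ℕ) (c : Fin m → ℝ) (v : Fin m → (Fin n → ℝ)),
     (∀ k, 0 < c k) ∧ (∀ k, v k ∈ S) ∧ β = ∑ k, c k • v k}

/-- A signed poset on `[n]`: a subset of `B_n` with antisymmetry, closed under
positive linear combinations within `B_n`. -/
def IsSignedPoset {n : ℕ} (P : Set (Fin n → ℝ)) : Prop :=
  P ⊆ Bn n ∧ (∀ α ∈ P, -α ∉ P) ∧ (∀ β ∈ Bn n, β ∈ PLC P → β ∈ P)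

/-- The signed order cone `K_P`. -/
def orderCone {n : ℕ} (P : Set (Fin n → ℝ)) : Set (Fin n → ℝ) :=
  {x | ∀ α ∈ P, 0 ≤ dot α x}

/-- The signed order polytope `O_P = K_P ∩ [-1,1]^n`. -/
def orderPolytope {n : ℕ} (P : Set (Fin n → ℝ)) : Set (Fin n → ℝ) :=
  {x | (∀ α ∈ P, 0 ≤ dot α x) ∧ ∀ i, -1 ≤ x i ∧ x i ≤ 1}

/-- The type-A root system `A_n ⊂ ℝ^n`. -/
def An (n : ℕ) : Set (Fin n → ℝ) := {α | ∃ i j : Fin n, i ≠ j ∧ α = ee n j - ee n i}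

lemma dot_sub_ee {n : ℕ} (i j : Fin n) (x : Fin n → ℝ) :
    dot (ee n j - ee n i) x = x j - x i := by
  simp [dot, ee, sub_mul, ite_mul, Finset.sum_sub_distrib]

lemma dot_sum {n m : ℕ} (c : Fin m → ℝ) (v : Fin m → Fin n → ℝ) (x : Fin n → ℝ) :
    dot (∑ k, c k • v k) x = ∑ k, c k * dot (v k) x := by
  simp only [dot, Finset.sum_apply, Pi.smul_apply, smul_eq_mul, Finset.mul_sum, Finset.sum_mul]
  rw [Finset.sum_comm]
  simp [mul_assoc]

lemma ee_sub_inj {n : ℕ} {i j i' j' : Fin n} (hij : i ≠ j) (hij' : i' ≠ j')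
    (h : ee n j - ee n i = ee n j' - ee n i') : i = i' ∧ j = j' := by
  have hj := congrFun h j
  have hi := congrFun h i
  simp only [Pi.sub_apply, ee] at hj hi
  constructor
  · by_contra hc
    simp [hij.symm, hij, Ne.symm hc] at hi
    split_ifs at hi <;> norm_num at hi
  · by_contra hc
    simp [hij.symm, hij, hc] at hj
    split_ifs at hj <;> norm_num at hj

/-- closure of the image of a partial order under PLC -/
lemma plc_closure {n : ℕ} (r : Fin n → Fin n → Prop) (hr : IsPartialOrder (Fin n) r)
    {i j : Fin n} (hij : i ≠ j)
    (h : ee n j - ee n i ∈ PLC {α : Fin n → ℝ | ∃ i j : Fin n, r i j ∧ i ≠ j ∧ α = ee n j - ee n i}) :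
    r i j := by
  obtain ⟨m, c, v, hc, hv, hsum⟩ := h
  by_contra hrij
  choose p q hpq hne hvk using hv
  set x : Fin n → ℝ := fun a => if r i a then 1 else 0 with hx
  have h1 : dot (ee n j - ee n i) x = -1 := by
    rw [dot_sub_ee]
    simp [hx, hrij, hr.refl i]
  have h2 : dot (ee n j - ee n i) x = ∑ k, c k * (x (q k) - x (p k)) := by
    rw [hsum, dot_sum]
    congr 1; funext k
    rw [hvk k, dot_sub_ee]
  have h3 : (0:ℝ) ≤ ∑ k, c k * (x (q k) - x (p k)) := by
    apply Finset.sum_nonneg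
    intro k _
    apply mul_nonneg (le_of_lt (hc k))
    by_cases hp : r i (p k)
    · have hq : r i (q k) := hr.trans _ _ _ hp (hpq k)
      simp [hx, hp, hq]
    · simp only [hx, hp, if_false]
      split_ifs <;> norm_num
  rw [h2] at h1
  linarith

/-- the map `Π ↦ {e_j - e_i : i <_Π j}` is a bijection between partial
orders on `[n]` and subsets `P ⊆ A_n` with antisymmetry and positive linear closure. -/
theorem stmt0 (n : ℕ) :
    Set.BijOn
      (fun r : Fin n → Fin n → Prop =>
        {α : Fin n → ℝ | ∃ i j : Fin n, r i j ∧ i ≠ j ∧ α = ee n j - ee n i})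
      {r | IsPartialOrder (Fin n) r}
      {P | P ⊆ An n ∧ (∀ α ∈ P, -α ∉ P) ∧ ∀ β ∈ An n, β ∈ PLC P → β ∈ P} := by
  refine ⟨?_, ?_, ?_⟩
  · -- MapsTo
    intro r hr
    simp only [Set.mem_setOf_eq] at hr ⊢
    refine ⟨?_, ?_, ?_⟩
    · rintro α ⟨i, j, _, hne, rfl⟩
      exact ⟨i, j, hne, rfl⟩
    · rintro α ⟨i, j, hij, hne, rfl⟩ ⟨i', j', hij', hne', heq⟩
      have : ee n i - ee n j = ee n j' - ee n i' := by
        rw [← heq]; abel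
      obtain ⟨h1, h2⟩ := ee_sub_inj hne.symm hne' this
      exact hne (hr.antisymm _ _ hij (h1 ▸ h2 ▸ hij'))
    · rintro β ⟨i, j, hne, rfl⟩ hplc
      exact ⟨i, j, plc_closure r hr hne hplc, hne, rfl⟩
  · -- InjOn
    intro r hr r' hr' heq
    simp only [Set.mem_setOf_eq] at hr hr'
    have key : ∀ (s s' : Fin n → Fin n → Prop), IsPartialOrder (Fin n) s → IsPartialOrder (Fin n) s' →
        ({α : Fin n → ℝ | ∃ i j : Fin n, s i j ∧ i ≠ j ∧ α = ee n j - ee n i} =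
         {α : Fin n → ℝ | ∃ i j : Fin n, s' i j ∧ i ≠ j ∧ α = ee n j - ee n i}) →
        ∀ i j, s i j → s' i j := by
      intro s s' hs hs' he i j hij
      by_cases hne : i = j
      · exact hne ▸ hs'.refl i
      · have : (ee n j - ee n i) ∈ {α : Fin n → ℝ | ∃ i j : Fin n, s' i j ∧ i ≠ j ∧ α = ee n j - ee n i} := by
          rw [← he]; exact ⟨i, j, hij, hne, rfl⟩
        obtain ⟨i', j', hij', hne', heq'⟩ := this
        obtain ⟨h1, h2⟩ := ee_sub_inj hne hne' heq'
        exact h1 ▸ h2 ▸ hij'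
    funext i j
    exact propext ⟨key r r' hr hr' heq i j, key r' r hr' hr heq.symm i j⟩
  · -- SurjOn
    rintro P ⟨hPA, hAnti, hClose⟩
    set r : Fin n → Fin n → Prop := fun i j => i = j ∨ ee n j - ee n i ∈ P with hrdef
    have hmem : ∀ {i j : Fin n}, i ≠ j → r i j → ee n j - ee n i ∈ P := by
      intro i j hne h
      rcases h with h | h
      · exact absurd h hne
      · exact h
    have hrpo : IsPartialOrder (Fin n) r := by
      refine { refl := fun i => Or.inl rfl, trans := ?_, antisymm := ?_ }
      · rintro i j k hij hjk
        by_cases h1 : i = j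
        · exact h1 ▸ hjk
        by_cases h2 : j = k
        · exact h2 ▸ hij
        have m1 := hmem h1 hij
        have m2 := hmem h2 hjk
        by_cases h3 : i = k
        · exfalso
          apply hAnti _ m1
          have : -(ee n j - ee n i) = ee n k - ee n j := by rw [h3]; abel
          rw [this]; exact m2
        · refine Or.inr (hClose _ ⟨i, k, h3, rfl⟩ ?_)
          refine ⟨2, ![1, 1], ![ee n j - ee n i, ee n k - ee n j], ?_, ?_, ?_⟩
          · intro k; fin_cases k <;> norm_num
          · intro k; fin_cases k <;> simpa using (by assumption)
          · rw [Fin.sum_univ_two]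
            simp only [Matrix.cons_val_zero, Matrix.cons_val_one, Matrix.head_cons, one_smul]
            abel
      · rintro i j hij hji
        by_contra hne
        apply hAnti _ (hmem hne hij)
        have : -(ee n j - ee n i) = ee n i - ee n j := by abel
        rw [this]; exact hmem (Ne.symm hne) hji
    refine ⟨r, hrpo, ?_⟩
    ext α
    simp only [Set.mem_setOf_eq]
    constructor
    · rintro ⟨i, j, hij, hne, rfl⟩
      exact hmem hne hij
    · intro hα
      obtain ⟨i, j, hne, rfl⟩ := hPA hα
      exact ⟨i, j, Or.inr hα, hne, rfl⟩
end
end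

section
/- For any signed poset P on [n], the signed order cone K_P = {x ∈ ℝ^n : ⟨α, x⟩ ≥ 0 for all α ∈ P} is full dimensional, i.e., K_P has nonempty interior in ℝ^n (equivalently, there exists x ∈ ℝ^n with ⟨α, x⟩ > 0 for all α ∈ P). -/
open Finset Pointwise

noncomputable section
attribute [local instance] Classical.propDecidable

lemma bn_finite (n : ℕ) : (Bn n).Finite := by
  have : Bn n ⊆ Set.range (fun p : Fin n × Fin n × Fin 6 =>
      match p.2.2 with
      | 0 => ee n p.1
      | 1 => -ee n p.1
      | 2 => ee n p.1 + ee n p.2.1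
      | 3 => -ee n p.1 - ee n p.2.1
      | 4 => ee n p.1 - ee n p.2.1
      | 5 => -ee n p.1 + ee n p.2.1) := by
    rintro α (⟨i, h | h⟩ | ⟨i, j, _, h | h | h | h⟩)
    · exact ⟨(i, i, 0), h.symm⟩
    · exact ⟨(i, i, 1), h.symm⟩
    · exact ⟨(i, j, 2), h.symm⟩
    · exact ⟨(i, j, 3), h.symm⟩
    · exact ⟨(i, j, 4), h.symm⟩
    · exact ⟨(i, j, 5), h.symm⟩
  exact (Set.finite_range _).subset this

lemma zero_not_mem_Bn (n : ℕ) : (0 : Fin n → ℝ) ∉ Bn n := by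
  rintro (⟨i, h | h⟩ | ⟨i, j, hij, h | h | h | h⟩) <;>
    (have := congrFun h i;
     first
       | simp [ee, Fin.ne_of_lt hij] at this
       | simp [ee] at this)

lemma neg_mem_Bn {n : ℕ} {α : Fin n → ℝ} (h : α ∈ Bn n) : -α ∈ Bn n := by
  rcases h with ⟨i, h | h⟩ | ⟨i, j, hij, h | h | h | h⟩
  · exact Or.inl ⟨i, Or.inr (by rw [h])⟩
  · exact Or.inl ⟨i, Or.inl (by rw [h, neg_neg])⟩
  · exact Or.inr ⟨i, j, hij, Or.inr (Or.inl (by rw [h]; abel))⟩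
  · exact Or.inr ⟨i, j, hij, Or.inl (by rw [h]; abel)⟩
  · exact Or.inr ⟨i, j, hij, Or.inr (Or.inr (Or.inr (by rw [h]; abel)))⟩
  · exact Or.inr ⟨i, j, hij, Or.inr (Or.inr (Or.inl (by rw [h]; abel)))⟩

lemma ee_repr {n : ℕ} (α : Fin n → ℝ) : ∑ i, α i • ee n i = α := by
  funext j
  simp only [Finset.sum_apply, Pi.smul_apply, ee, smul_eq_mul, mul_ite, mul_one, mul_zero]
  simp

/-- the order cone of a signed poset is full dimensional. -/
theorem stmt3 {n : ℕ} (P : Set (Fin n → ℝ)) (hP : IsSignedPoset P) :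
    ∃ x : Fin n → ℝ, ∀ α ∈ P, 0 < dot α x := by
  obtain ⟨hPB, hanti, hclosed⟩ := hP
  have hPfin : P.Finite := (bn_finite n).subset hPB
  set s : Finset (Fin n → ℝ) := hPfin.toFinset with hs
  -- 0 is not in the convex hull of P
  have h0 : (0 : Fin n → ℝ) ∉ convexHull ℝ P := by
    intro h0
    rw [← hPfin.coe_toFinset, Finset.mem_convexHull'] at h0
    obtain ⟨w, hw0, hw1, hwsum⟩ := h0
    set pos : Finset (Fin n → ℝ) := s.filter (fun y => w y ≠ 0) with hpos
    have hsum_pos : ∑ y ∈ pos, w y • y = 0 := by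
      rw [hpos, Finset.sum_filter_of_ne, hwsum]
      intro y _ hy hw
      exact hy (by rw [hw, zero_smul])
    have hpos_ne : pos.Nonempty := by
      by_contra h
      rw [Finset.not_nonempty_iff_eq_empty] at h
      have : ∑ y ∈ s, w y = 0 := by
        apply Finset.sum_eq_zero
        intro y hy
        by_contra hw
        exact (Finset.notMem_empty y) (h ▸ Finset.mem_filter.2 ⟨hy, hw⟩)
      rw [hw1] at this; norm_num at this
    obtain ⟨y0, hy0⟩ := hpos_ne
    have hy0s : y0 ∈ s := (Finset.mem_filter.1 hy0).1
    have hy0P : y0 ∈ P := hPfin.mem_toFinset.1 hy0s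
    have hwy0 : 0 < w y0 :=
      lt_of_le_of_ne (hw0 y0 hy0s) (Ne.symm (Finset.mem_filter.1 hy0).2)
    set rest : Finset (Fin n → ℝ) := pos.erase y0 with hrest
    have hrest_sum : ∑ y ∈ rest, w y • y = -(w y0 • y0) := by
      have h := Finset.add_sum_erase pos (fun y => w y • y) hy0
      rw [hsum_pos] at h
      beta_reduce at h
      exact eq_neg_of_add_eq_zero_right h
    have hrestP : ∀ y ∈ rest, y ∈ P := fun y hy =>
      hPfin.mem_toFinset.1 (Finset.mem_filter.1 (Finset.mem_of_mem_erase hy)).1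
    have hrestw : ∀ y ∈ rest, 0 < w y := fun y hy =>
      lt_of_le_of_ne (hw0 y (Finset.mem_filter.1 (Finset.mem_of_mem_erase hy)).1)
        (Ne.symm (Finset.mem_filter.1 (Finset.mem_of_mem_erase hy)).2)
    have hrest_ne : rest.Nonempty := by
      by_contra h
      rw [Finset.not_nonempty_iff_eq_empty] at h
      rw [h, Finset.sum_empty] at hrest_sum
      have h2 : w y0 • y0 = 0 := neg_eq_zero.1 hrest_sum.symm
      rcases smul_eq_zero.1 h2 with h' | h'
      · exact hwy0.ne' h'
      · exact zero_not_mem_Bn n (h' ▸ hPB hy0P)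
    -- -y0 is a positive linear combination of elements of P
    have hneg : -y0 ∈ PLC P := by
      refine ⟨rest.card, fun k => w (rest.equivFin.symm k) / w y0,
        fun k => (rest.equivFin.symm k : Fin n → ℝ), ?_, ?_, ?_⟩
      · intro k
        exact div_pos (hrestw _ (rest.equivFin.symm k).2) hwy0
      · intro k
        exact hrestP _ (rest.equivFin.symm k).2
      · have h1 : ∑ k : Fin rest.card,
            (w (rest.equivFin.symm k) / w y0) • ((rest.equivFin.symm k : Fin n → ℝ))
            = ∑ a ∈ rest, (w a / w y0) • a := by
          rw [← Finset.sum_coe_sort rest (fun a => (w a / w y0) • a)]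
          exact Equiv.sum_comp rest.equivFin.symm
            (fun a : rest => (w (a : Fin n → ℝ) / w y0) • (a : Fin n → ℝ))
        rw [h1]
        have h2 : ∑ a ∈ rest, (w a / w y0) • a = (w y0)⁻¹ • ∑ a ∈ rest, w a • a := by
          rw [Finset.smul_sum]
          exact Finset.sum_congr rfl fun a _ => by rw [smul_smul, div_eq_inv_mul]
        rw [h2, hrest_sum, smul_neg, smul_smul, inv_mul_cancel₀ hwy0.ne', one_smul]
    have : -y0 ∈ P := hclosed _ (neg_mem_Bn (hPB hy0P)) hneg
    exact hanti y0 hy0P this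
  -- separate 0 from the convex hull
  have hconv : Convex ℝ (convexHull ℝ P) := convex_convexHull ℝ P
  have hclosed' : IsClosed (convexHull ℝ P) := (hPfin.isCompact_convexHull (𝕜 := ℝ)).isClosed
  obtain ⟨f, u, hfu, hfb⟩ := geometric_hahn_banach_point_closed hconv hclosed' h0
  refine ⟨fun i => f (ee n i), fun α hα => ?_⟩
  have hu : 0 < u := by simpa using hfu
  have : dot α (fun i => f (ee n i)) = f α := by
    rw [dot]
    have : α = ∑ i, α i • ee n i := (ee_repr α).symm
    conv_rhs => rw [this]
    rw [map_sum]
    simp [smul_eq_mul]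
  rw [this]
  exact hu.trans (hfb α (subset_convexHull ℝ P hα))
end
end

section
/- Let P be a signed poset on [n]. Then the signed order polytope O_P is described irredundantly by the inequalities: ⟨α, x⟩ ≥ 0 for α in the minimal representation minrep(P), x_i ≤ 1 for every positive maximal element i, and x_i ≥ -1 for every negative maximal element i. In particular, this set of inequalities defines O_P and no inequality among them may be removed. -/
open Finset Pointwise

noncomputable section
attribute [local instance] Classical.propDecidable

/-- `S` generates `P` via positive linear combinations. -/
def GenBy {n : ℕ} (S P : Set (Fin n → ℝ)) : Prop := S ⊆ P ∧ ∀ β ∈ P, β ∈ PLC S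

/-- `M` is the (unique) minimal representation of the signed poset `P`. -/
def IsMinrep {n : ℕ} (P M : Set (Fin n → ℝ)) : Prop :=
  GenBy M P ∧ ∀ S : Set (Fin n → ℝ), GenBy S P → M ⊆ S

/-- `i` is a positive maximal element of `P`. -/
def PMax {n : ℕ} (P : Set (Fin n → ℝ)) (i : Fin n) : Prop := ∀ α ∈ P, α i ≠ 0 → α i = 1

/-- `i` is a negative maximal element of `P`. -/
def NMax {n : ℕ} (P : Set (Fin n → ℝ)) (i : Fin n) : Prop := ∀ α ∈ P, α i ≠ 0 → α i = -1

/-- The polyhedron cut out by `⟨α, x⟩ ≥ 0` for `α ∈ M`, `x_i ≤ 1` for `i ∈ Sp`,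
and `x_i ≥ -1` for `i ∈ Sn`. -/
def polyOf {n : ℕ} (M : Set (Fin n → ℝ)) (Sp Sn : Set (Fin n)) : Set (Fin n → ℝ) :=
  {x | (∀ α ∈ M, 0 ≤ dot α x) ∧ (∀ i ∈ Sp, x i ≤ 1) ∧ (∀ i ∈ Sn, -1 ≤ x i)}

namespace Stmt7Aux

variable {n : ℕ}

lemma ee_self (i : Fin n) : ee n i i = 1 := by simp [ee]

lemma ee_ne {i j : Fin n} (h : j ≠ i) : ee n i j = 0 := by simp [ee, h]

lemma dot_smul (c : ℝ) (a x : Fin n → ℝ) : dot (c • a) x = c * dot a x := by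
  simp [dot, Finset.mul_sum, mul_assoc]

lemma dot_add (a b x : Fin n → ℝ) : dot (a + b) x = dot a x + dot b x := by
  simp [dot, add_mul, Finset.sum_add_distrib]

lemma dot_neg (a x : Fin n → ℝ) : dot (-a) x = - dot a x := by
  simp [dot]

lemma dot_sub (a b x : Fin n → ℝ) : dot (a - b) x = dot a x - dot b x := by
  simp [dot, sub_mul, Finset.sum_sub_distrib]

lemma dot_ee (i : Fin n) (x : Fin n → ℝ) : dot (ee n i) x = x i := by
  simp [dot, ee, ite_mul]

lemma dot_sum {m : ℕ} (f : Fin m → Fin n → ℝ) (x : Fin n → ℝ) :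
    dot (∑ k, f k) x = ∑ k, dot (f k) x := by
  simp only [dot, Finset.sum_apply, Finset.sum_mul]
  exact Finset.sum_comm

lemma mem_PLC_smul {S : Set (Fin n → ℝ)} {α : Fin n → ℝ} (hα : α ∈ S) {c : ℝ} (hc : 0 < c) :
    c • α ∈ PLC S := by
  exact ⟨1, fun _ => c, fun _ => α, fun _ => hc, fun _ => hα, by simp⟩

lemma mem_PLC {S : Set (Fin n → ℝ)} {α : Fin n → ℝ} (hα : α ∈ S) : α ∈ PLC S := by
  simpa using mem_PLC_smul hα one_pos

lemma zero_mem_PLC (S : Set (Fin n → ℝ)) : (0 : Fin n → ℝ) ∈ PLC S :=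
  ⟨0, fun k => 1, fun k => 0, fun k => k.elim0, fun k => k.elim0, by simp⟩

lemma PLC_add {S : Set (Fin n → ℝ)} {β γ : Fin n → ℝ} (hβ : β ∈ PLC S) (hγ : γ ∈ PLC S) :
    β + γ ∈ PLC S := by
  obtain ⟨m1, c1, v1, hc1, hv1, h1⟩ := hβ
  obtain ⟨m2, c2, v2, hc2, hv2, h2⟩ := hγ
  refine ⟨m1 + m2, Fin.addCases c1 c2, Fin.addCases v1 v2, ?_, ?_, ?_⟩
  · intro k; induction k using Fin.addCases <;> simp [*]
  · intro k; induction k using Fin.addCases <;> simp [*]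
  · rw [Fin.sum_univ_add]
    simp [h1, h2]

lemma PLC_smul {S : Set (Fin n → ℝ)} {β : Fin n → ℝ} (hβ : β ∈ PLC S) {c : ℝ} (hc : 0 < c) :
    c • β ∈ PLC S := by
  obtain ⟨m, cs, v, hcs, hv, h⟩ := hβ
  refine ⟨m, fun k => c * cs k, v, fun k => mul_pos hc (hcs k), hv, ?_⟩
  simp [h, Finset.smul_sum, smul_smul]

lemma PLC_sub_self {S T : Set (Fin n → ℝ)} (h : S ⊆ PLC T) : PLC S ⊆ PLC T := by
  rintro β ⟨m, c, v, hc, hv, rfl⟩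
  refine Finset.sum_induction _ (· ∈ PLC T) (fun a b ha hb => PLC_add ha hb)
    (zero_mem_PLC T) (fun k _ => PLC_smul (h (hv k)) (hc k))

lemma PLC_mono {S T : Set (Fin n → ℝ)} (h : S ⊆ T) : PLC S ⊆ PLC T :=
  PLC_sub_self fun a ha => mem_PLC (h ha)

lemma dot_nonneg_of_PLC {S : Set (Fin n → ℝ)} {β x : Fin n → ℝ} (hβ : β ∈ PLC S)
    (h : ∀ α ∈ S, 0 ≤ dot α x) : 0 ≤ dot β x := by
  obtain ⟨m, c, v, hc, hv, rfl⟩ := hβ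
  rw [dot_sum]
  refine Finset.sum_nonneg fun k _ => ?_
  rw [dot_smul]
  exact mul_nonneg (hc k).le (h _ (hv k))

end Stmt7Aux
namespace Stmt7Aux

variable {n : ℕ}

lemma Bn_coords {α : Fin n → ℝ} (h : α ∈ Bn n) (j : Fin n) :
    α j = -1 ∨ α j = 0 ∨ α j = 1 := by
  rcases h with ⟨i, h | h⟩ | ⟨p, q, hpq, h | h | h | h⟩ <;> subst h <;>
      simp only [Pi.add_apply, Pi.sub_apply, Pi.neg_apply, ee]
  · by_cases h : j = i <;> simp [h]
  · by_cases h : j = i <;> simp [h]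
  all_goals (
    by_cases h1 : j = p <;> by_cases h2 : j = q
    · exact absurd (h1.symm.trans h2) hpq.ne
    all_goals simp [h1, h2, hpq.ne, hpq.ne'])

lemma zero_not_mem_Bn : (0 : Fin n → ℝ) ∉ Bn n := by
  rintro (⟨i, h | h⟩ | ⟨p, q, hpq, h | h | h | h⟩)
  · simpa [ee] using congrFun h i
  · simpa [ee] using congrFun h i
  · simpa [ee, hpq.ne] using congrFun h p
  · simpa [ee, hpq.ne] using congrFun h p
  · simpa [ee, hpq.ne] using congrFun h p
  · simpa [ee, hpq.ne] using congrFun h p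

lemma Bn_ne_zero {α : Fin n → ℝ} (h : α ∈ Bn n) : α ≠ 0 := fun h0 => zero_not_mem_Bn (h0 ▸ h)

lemma neg_mem_Bn {α : Fin n → ℝ} (h : α ∈ Bn n) : -α ∈ Bn n := by
  rcases h with ⟨i, h | h⟩ | ⟨p, q, hpq, h | h | h | h⟩ <;> subst h
  · exact Or.inl ⟨i, Or.inr rfl⟩
  · exact Or.inl ⟨i, Or.inl (by abel)⟩
  · exact Or.inr ⟨p, q, hpq, Or.inr (Or.inl (by abel))⟩
  · exact Or.inr ⟨p, q, hpq, Or.inl (by abel)⟩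
  · exact Or.inr ⟨p, q, hpq, Or.inr (Or.inr (Or.inr (by abel)))⟩
  · exact Or.inr ⟨p, q, hpq, Or.inr (Or.inr (Or.inl (by abel)))⟩

lemma Bn_neg_coord {α : Fin n → ℝ} (h : α ∈ Bn n) {i : Fin n} (hi : α i = -1) :
    α = -ee n i ∨ ∃ j, j ≠ i ∧ (α = -ee n i + ee n j ∨ α = -ee n i - ee n j) := by
  rcases h with ⟨p, h | h⟩ | ⟨p, q, hpq, h | h | h | h⟩ <;> subst h
  · exfalso; by_cases h : i = p <;> simp [ee, h] at hi <;> norm_num at hi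
  · left
    by_cases h : i = p
    · subst h; rfl
    · exfalso; simp [ee, h] at hi
  · exfalso
    by_cases h1 : i = p <;> by_cases h2 : i = q <;>
      simp [ee, h1, h2, hpq.ne, hpq.ne'] at hi <;> norm_num at hi
  · by_cases h1 : i = p
    · subst h1
      exact Or.inr ⟨q, hpq.ne', Or.inr rfl⟩
    · by_cases h2 : i = q
      · subst h2
        exact Or.inr ⟨p, hpq.ne, Or.inr (by abel)⟩
      · exfalso; simp [ee, h1, h2] at hi
  · by_cases h2 : i = q
    · subst h2
      exact Or.inr ⟨p, hpq.ne, Or.inl (by abel)⟩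
    · exfalso
      by_cases h1 : i = p <;> simp [ee, h1, h2, hpq.ne, hpq.ne'] at hi <;> norm_num at hi
  · by_cases h1 : i = p
    · subst h1
      exact Or.inr ⟨q, hpq.ne', Or.inl rfl⟩
    · exfalso
      by_cases h2 : i = q <;> simp [ee, h1, h2, hpq.ne, hpq.ne'] at hi <;> norm_num at hi

lemma Bn_pos_coord {α : Fin n → ℝ} (h : α ∈ Bn n) {i : Fin n} (hi : α i = 1) :
    α = ee n i ∨ ∃ j, j ≠ i ∧ (α = ee n i - ee n j ∨ α = ee n i + ee n j) := by
  have h' : -α ∈ Bn n := neg_mem_Bn h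
  have hi' : (-α) i = -1 := by simp [hi]
  rcases Bn_neg_coord h' hi' with h0 | ⟨j, hj, h0 | h0⟩
  · left; have := congrArg Neg.neg h0; simpa using this
  · right; exact ⟨j, hj, Or.inl (by have := congrArg Neg.neg h0; simp at this; rw [this]; abel)⟩
  · right; exact ⟨j, hj, Or.inr (by have := congrArg Neg.neg h0; simp at this; rw [this]; abel)⟩

end Stmt7Aux
namespace Stmt7Aux

variable {n : ℕ}

/-- sign value of a boolean -/
def sv (b : Bool) : ℝ := if b then 1 else -1

/-- the signed unit vector attached to a signed index -/
def vec (a : Fin n × Bool) : Fin n → ℝ := sv a.2 • ee n a.1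

lemma sv_ne_zero (b : Bool) : sv b ≠ 0 := by cases b <;> norm_num [sv]

lemma sv_neg {b b' : Bool} (h : b ≠ b') : sv b' = -sv b := by
  cases b <;> cases b' <;> simp_all [sv]

lemma sv_smul_ee_mem_Bn (b : Bool) (i : Fin n) : sv b • ee n i ∈ Bn n := by
  cases b
  · exact Or.inl ⟨i, Or.inr (by rw [sv]; norm_num)⟩
  · exact Or.inl ⟨i, Or.inl (by rw [sv]; norm_num)⟩

lemma mem_Bn_pair {i k : Fin n} (h : i ≠ k) (s u : Bool) :
    sv s • ee n i - sv u • ee n k ∈ Bn n := by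
  have hik : ¬ (i = k) := h
  rcases h.lt_or_gt with hlt | hlt
  · refine Or.inr ⟨i, k, hlt, ?_⟩
    cases s <;> cases u
    · exact Or.inr (Or.inr (Or.inr (by funext j; simp [sv, ee]; try ring)))
    · exact Or.inr (Or.inl (by funext j; simp [sv, ee]; try ring))
    · exact Or.inl (by funext j; simp [sv, ee]; try ring)
    · exact Or.inr (Or.inr (Or.inl (by funext j; simp [sv, ee]; try ring)))
  · refine Or.inr ⟨k, i, hlt, ?_⟩
    cases s <;> cases u
    · exact Or.inr (Or.inr (Or.inl (by funext j; simp [sv, ee]; try ring)))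
    · exact Or.inr (Or.inl (by funext j; simp [sv, ee]; try ring))
    · exact Or.inl (by funext j; simp [sv, ee]; try ring)
    · exact Or.inr (Or.inr (Or.inr (by funext j; simp [sv, ee]; try ring)))

/-- If a positive combination of two elements of a signed poset is a difference of
signed unit vectors, it is a positive multiple of an element of the poset. -/
lemma comp_lemma {P : Set (Fin n → ℝ)} (hP : IsSignedPoset P)
    {α1 α2 : Fin n → ℝ} (h1 : α1 ∈ P) (h2 : α2 ∈ P) {c1 c2 : ℝ} (hc1 : 0 < c1)
    (hc2 : 0 < c2) {a c : Fin n × Bool}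
    (h : vec a - vec c = c1 • α1 + c2 • α2) :
    ∃ α ∈ P, ∃ d : ℝ, 0 < d ∧ vec a - vec c = d • α := by
  have hplc : vec a - vec c ∈ PLC P := h ▸ PLC_add (mem_PLC_smul h1 hc1) (mem_PLC_smul h2 hc2)
  by_cases hik : a.1 = c.1
  · by_cases hsu : a.2 = c.2
    · -- vec a = vec c, so the combination is 0; contradiction with antisymmetry
      exfalso
      have hv : vec a = vec c := by unfold vec; rw [hik, hsu]
      rw [hv, sub_self] at h
      have hglob : ∀ jj, α2 jj = -(c1 / c2) * α1 jj := by
        intro jj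
        have e := congrFun h jj
        simp only [Pi.add_apply, Pi.smul_apply, smul_eq_mul, Pi.zero_apply] at e
        field_simp
        linarith
      obtain ⟨j, hj⟩ := Function.ne_iff.mp (Bn_ne_zero (hP.1 h1))
      have e2 := hglob j
      have hratio : c1 / c2 = 1 := by
        have hpos : 0 < c1 / c2 := div_pos hc1 hc2
        rcases Bn_coords (hP.1 h1) j with ha | ha | ha
        · rcases Bn_coords (hP.1 h2) j with hb | hb | hb <;> rw [ha, hb] at e2 <;> nlinarith
        · exact absurd ha hj
        · rcases Bn_coords (hP.1 h2) j with hb | hb | hb <;> rw [ha, hb] at e2 <;> nlinarith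
      have hneg : α2 = -α1 := by
        funext jj
        have := hglob jj
        rw [hratio] at this
        simpa using this
      exact hP.2.1 α1 h1 (hneg ▸ h2)
    · -- same index, opposite signs : difference is 2 • (±e_i)
      have hv : vec a - vec c = (2 * sv a.2) • ee n a.1 := by
        unfold vec
        rw [← hik, sv_neg hsu]
        funext j
        simp only [Pi.sub_apply, Pi.smul_apply, smul_eq_mul]
        ring
      refine ⟨sv a.2 • ee n a.1, ?_, 2, by norm_num, ?_⟩
      · apply hP.2.2 _ (sv_smul_ee_mem_Bn _ _)
        have : sv a.2 • ee n a.1 = (1/2 : ℝ) • (vec a - vec c) := by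
          rw [hv, smul_smul]
          congr 1
          rcases (by cases a.2 <;> simp [sv] : sv a.2 = 1 ∨ sv a.2 = -1) with hh | hh <;>
            rw [hh] <;> norm_num
        rw [this]
        exact PLC_smul hplc (by norm_num)
      · rw [hv, smul_smul]
  · -- distinct indices : difference is itself a root
    refine ⟨vec a - vec c, ?_, 1, one_pos, (one_smul _ _).symm⟩
    exact hP.2.2 _ (mem_Bn_pair hik a.2 c.2) hplc

/-- The descent relation on signed indices. -/
def Rel (P : Set (Fin n → ℝ)) (b a : Fin n × Bool) : Prop :=
  ∃ α ∈ P, ∃ d : ℝ, 0 < d ∧ vec b - vec a = d • α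

lemma transGen_rel {P : Set (Fin n → ℝ)} (hP : IsSignedPoset P) {b a : Fin n × Bool}
    (h : Relation.TransGen (Rel P) b a) :
    ∃ α ∈ P, ∃ d : ℝ, 0 < d ∧ vec b - vec a = d • α := by
  induction h with
  | single h => exact h
  | tail _ hstep ih =>
    obtain ⟨α1, h1, d1, hd1, e1⟩ := ih
    obtain ⟨α2, h2, d2, hd2, e2⟩ := hstep
    apply comp_lemma hP h1 h2 hd1 hd2
    rw [← e1, ← e2]
    abel

lemma rel_wf {P : Set (Fin n → ℝ)} (hP : IsSignedPoset P) : WellFounded (Rel P : (Fin n × Bool) → (Fin n × Bool) → Prop) := by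
  have hirr : ∀ a, ¬ Relation.TransGen (Rel P) a a := by
    intro a ha
    obtain ⟨α, hα, d, hd, e⟩ := transGen_rel hP ha
    rw [sub_self] at e
    have : α = 0 := by
      have := e.symm
      rwa [smul_eq_zero, or_iff_right hd.ne'] at this
    exact Bn_ne_zero (hP.1 hα) this
  have : IsTrans (Fin n × Bool) (Relation.TransGen (Rel P)) := inferInstance
  have : IsIrrefl (Fin n × Bool) (Relation.TransGen (Rel P)) := ⟨hirr⟩
  exact Subrelation.wf (fun h => Relation.TransGen.single h)
    (Finite.wellFounded_of_trans_of_irrefl (Relation.TransGen (Rel P)))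

end Stmt7Aux
namespace Stmt7Aux

variable {n : ℕ}

lemma box_lemma {P M : Set (Fin n → ℝ)} (hP : IsSignedPoset P) (hM : IsMinrep P M)
    {x : Fin n → ℝ} (hx : x ∈ polyOf M {i | PMax P i} {i | NMax P i}) :
    ∀ a : Fin n × Bool, sv a.2 * x a.1 ≤ 1 := by
  obtain ⟨hx1, hx2, hx3⟩ := hx
  have hPx : ∀ α ∈ P, 0 ≤ dot α x := fun α hα => dot_nonneg_of_PLC (hM.1.2 α hα) hx1
  intro a
  induction a using WellFounded.induction (rel_wf hP) with
  | _ a ih =>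
  obtain ⟨i, s⟩ := a
  cases s
  · -- negative side : show -x i ≤ 1
    simp only [sv, Bool.false_eq_true, if_false, neg_one_mul]
    by_cases hmax : NMax P i
    · have := hx3 i hmax; linarith
    · rw [NMax] at hmax; push_neg at hmax
      obtain ⟨α, hαP, hαi0, hαi1⟩ := hmax
      have hαi : α i = 1 := by
        rcases Bn_coords (hP.1 hαP) i with h | h | h
        · exact absurd h hαi1
        · exact absurd h hαi0
        · exact h
      have h0 := hPx α hαP
      rcases Bn_pos_coord (hP.1 hαP) hαi with hform | ⟨j, hj, hform | hform⟩
      · rw [hform, dot_ee] at h0; linarith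
      · rw [hform, dot_sub, dot_ee, dot_ee] at h0
        have hrel : Rel P (j, false) (i, false) :=
          ⟨α, hαP, 1, one_pos, by
            rw [one_smul, hform]; funext jj; simp [vec, sv, ee]; try ring⟩
        have hIH := ih (j, false) hrel
        simp only [sv, Bool.false_eq_true, if_false, neg_one_mul] at hIH
        linarith
      · rw [hform, dot_add, dot_ee, dot_ee] at h0
        have hrel : Rel P (j, true) (i, false) :=
          ⟨α, hαP, 1, one_pos, by
            rw [one_smul, hform]; funext jj; simp [vec, sv, ee]; try ring⟩
        have hIH := ih (j, true) hrel
        simp only [sv, if_true, one_mul] at hIH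
        linarith
  · -- positive side : show x i ≤ 1
    simp only [sv, if_true, one_mul]
    by_cases hmax : PMax P i
    · exact hx2 i hmax
    · rw [PMax] at hmax; push_neg at hmax
      obtain ⟨α, hαP, hαi0, hαi1⟩ := hmax
      have hαi : α i = -1 := by
        rcases Bn_coords (hP.1 hαP) i with h | h | h
        · exact h
        · exact absurd h hαi0
        · exact absurd h hαi1
      have h0 := hPx α hαP
      rcases Bn_neg_coord (hP.1 hαP) hαi with hform | ⟨j, hj, hform | hform⟩
      · rw [hform, dot_neg, dot_ee] at h0; linarith
      · rw [hform, dot_add, dot_neg, dot_ee, dot_ee] at h0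
        have hrel : Rel P (j, true) (i, true) :=
          ⟨α, hαP, 1, one_pos, by
            rw [one_smul, hform]; funext jj; simp [vec, sv, ee]; try ring⟩
        have hIH := ih (j, true) hrel
        simp only [sv, if_true, one_mul] at hIH
        linarith
      · rw [hform, dot_sub, dot_neg, dot_ee, dot_ee] at h0
        have hrel : Rel P (j, false) (i, true) :=
          ⟨α, hαP, 1, one_pos, by
            rw [one_smul, hform]; funext jj; simp [vec, sv, ee]; try ring⟩
        have hIH := ih (j, false) hrel
        simp only [sv, Bool.false_eq_true, if_false, neg_one_mul] at hIH
        linarith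

lemma part1 {P M : Set (Fin n → ℝ)} (hP : IsSignedPoset P) (hM : IsMinrep P M) :
    polyOf M {i | PMax P i} {i | NMax P i} = orderPolytope P := by
  ext x
  constructor
  · intro hx
    refine ⟨fun α hα => dot_nonneg_of_PLC (hM.1.2 α hα) hx.1, fun i => ⟨?_, ?_⟩⟩
    · have := box_lemma hP hM hx (i, false)
      simp only [sv, Bool.false_eq_true, if_false, neg_one_mul] at this
      linarith
    · have := box_lemma hP hM hx (i, true)
      simpa [sv] using this
  · rintro ⟨h1, h2⟩
    exact ⟨fun α hα => h1 α (hM.1.1 hα), fun i _ => (h2 i).2, fun i _ => (h2 i).1⟩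

end Stmt7Aux
namespace Stmt7Aux

variable {n : ℕ}

lemma dot_spike (α : Fin n → ℝ) (i₀ : Fin n) (t : ℝ) :
    dot α (fun j => if j = i₀ then t else 0) = α i₀ * t := by
  simp [dot, mul_ite]

lemma part3 {P M : Set (Fin n → ℝ)} (hP : IsSignedPoset P) (hM : IsMinrep P M)
    (i₀ : Fin n) (hmax : PMax P i₀) :
    polyOf M ({i | PMax P i} \ {i₀}) {i | NMax P i} ≠ orderPolytope P := by
  intro heq
  set x : Fin n → ℝ := fun j => if j = i₀ then 2 else 0 with hxdef
  have hx : x ∈ polyOf M ({i | PMax P i} \ {i₀}) {i | NMax P i} := by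
    refine ⟨fun α hα => ?_, fun i hi => ?_, fun i _ => ?_⟩
    · rw [hxdef, dot_spike]
      by_cases h0 : α i₀ = 0
      · rw [h0]; norm_num
      · rw [hmax α (hM.1.1 hα) h0]; norm_num
    · have : i ≠ i₀ := hi.2
      simp [hxdef, this]
    · rw [hxdef]
      by_cases h : i = i₀ <;> simp [h] <;> norm_num
  rw [heq] at hx
  have := (hx.2 i₀).2
  simp [hxdef] at this


lemma part4 {P M : Set (Fin n → ℝ)} (hP : IsSignedPoset P) (hM : IsMinrep P M)
    (i₀ : Fin n) (hmax : NMax P i₀) :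
    polyOf M {i | PMax P i} ({i | NMax P i} \ {i₀}) ≠ orderPolytope P := by
  intro heq
  set x : Fin n → ℝ := fun j => if j = i₀ then -2 else 0 with hxdef
  have hx : x ∈ polyOf M {i | PMax P i} ({i | NMax P i} \ {i₀}) := by
    refine ⟨fun α hα => ?_, fun i _ => ?_, fun i hi => ?_⟩
    · rw [hxdef, dot_spike]
      by_cases h0 : α i₀ = 0
      · rw [h0]; norm_num
      · rw [hmax α (hM.1.1 hα) h0]; norm_num
    · rw [hxdef]
      by_cases h : i = i₀ <;> simp [h] <;> norm_num
    · have : i ≠ i₀ := hi.2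
      simp [hxdef, this]
  rw [heq] at hx
  have := (hx.2 i₀).1
  simp [hxdef] at this


end Stmt7Aux
namespace Stmt7Aux

variable {n : ℕ}

lemma Bn_finite : (Bn n).Finite := by
  have hsub : Bn n ⊆ (⋃ i : Fin n, {ee n i, -ee n i}) ∪
      ⋃ i : Fin n, ⋃ j : Fin n,
        ({ee n i + ee n j, -ee n i - ee n j, ee n i - ee n j, -ee n i + ee n j} :
          Set (Fin n → ℝ)) := by
    rintro α (⟨i, h | h⟩ | ⟨i, j, hij, h | h | h | h⟩) <;> subst h
    · exact Set.mem_union_left _ (Set.mem_iUnion.2 ⟨i, by simp⟩)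
    · exact Set.mem_union_left _ (Set.mem_iUnion.2 ⟨i, by simp⟩)
    all_goals exact Set.mem_union_right _ (Set.mem_iUnion.2 ⟨i, Set.mem_iUnion.2 ⟨j, by simp⟩⟩)
  refine Set.Finite.subset (Set.Finite.union ?_ ?_) hsub
  · exact Set.finite_iUnion fun i => (Set.finite_singleton _).insert _
  · exact Set.finite_iUnion fun i => Set.finite_iUnion fun j =>
      ((((Set.finite_singleton _).insert _).insert _).insert _)

/-- Nonnegative combinations of elements of a finite set. -/
def NNC (T : Finset (Fin n → ℝ)) : Set (Fin n → ℝ) :=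
  {x | ∃ c : (Fin n → ℝ) → ℝ, (∀ t ∈ T, 0 ≤ c t) ∧ x = ∑ t ∈ T, c t • t}

lemma NNC_subset_PLC {T : Finset (Fin n → ℝ)} {S : Set (Fin n → ℝ)}
    (hT : ↑T ⊆ S) : NNC T ⊆ PLC S := by
  rintro x ⟨c, hc, rfl⟩
  refine Finset.sum_induction _ (· ∈ PLC S) (fun a b ha hb => PLC_add ha hb)
    (zero_mem_PLC S) fun t ht => ?_
  rcases eq_or_lt_of_le (hc t ht) with h0 | hpos
  · rw [← h0, zero_smul]; exact zero_mem_PLC S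
  · exact mem_PLC_smul (hT ht) hpos

lemma PLC_subset_NNC {S : Finset (Fin n → ℝ)} {x : Fin n → ℝ}
    (hx : x ∈ PLC (↑S : Set (Fin n → ℝ))) : x ∈ NNC S := by
  obtain ⟨m, c, v, hc, hv, rfl⟩ := hx
  refine ⟨fun t => ∑ k ∈ Finset.univ.filter (fun k => v k = t), c k,
    fun t _ => Finset.sum_nonneg fun k _ => (hc k).le, ?_⟩
  rw [← Finset.sum_fiberwise_of_maps_to (fun k _ => Finset.mem_coe.1 (hv k))
    (fun k => c k • v k)]
  refine Finset.sum_congr rfl fun t _ => ?_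
  rw [Finset.sum_smul]
  exact Finset.sum_congr rfl fun k hk => by rw [(Finset.mem_filter.1 hk).2]

/-- Carathéodory's theorem for cones: a nonnegative combination is a nonnegative
combination of a linearly independent subset. -/
lemma cara : ∀ T : Finset (Fin n → ℝ), ∀ x ∈ NNC T,
    ∃ T' : Finset (Fin n → ℝ), T' ⊆ T ∧
      LinearIndependent ℝ (fun t : {y // y ∈ T'} => (t : Fin n → ℝ)) ∧ x ∈ NNC T' := by
  intro T
  induction T using Finset.strongInduction with
  | _ T ih =>
    intro x hx
    by_cases hli : LinearIndependent ℝ (fun t : {y // y ∈ T} => (t : Fin n → ℝ))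
    · exact ⟨T, Finset.Subset.refl T, hli, hx⟩
    obtain ⟨g, hg0, i₀, hgi₀⟩ := Fintype.not_linearIndependent_iff.1 hli
    obtain ⟨c, hc, rfl⟩ := hx
    -- turn g into a function on all vectors, with a positive value somewhere on T
    obtain ⟨dd, hdd0, t₁, ht₁T, hddt₁⟩ :
        ∃ dd : (Fin n → ℝ) → ℝ, (∑ t ∈ T, dd t • t = 0) ∧ ∃ t₁ ∈ T, 0 < dd t₁ := by
      rcases hgi₀.lt_or_gt with hneg | hpos
      · refine ⟨fun t => if h : t ∈ T then -g ⟨t, h⟩ else 0, ?_, ↑i₀, i₀.2, ?_⟩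
        · rw [← Finset.sum_attach T fun t => (if h : t ∈ T then -g ⟨t, h⟩ else 0) • t]
          have : ∀ t : {y // y ∈ T},
              (if h : (t : Fin n → ℝ) ∈ T then -g ⟨t, h⟩ else 0) • (t : Fin n → ℝ)
                = -(g t • (t : Fin n → ℝ)) := by
            intro t; rw [dif_pos t.2, neg_smul]
          rw [Finset.univ_eq_attach] at hg0
          simp only [this]
          rw [Finset.sum_neg_distrib, hg0, neg_zero]
        · show 0 < if h : (↑i₀ : Fin n → ℝ) ∈ T then -g ⟨↑i₀, h⟩ else 0
          rw [dif_pos i₀.2]; simpa using hneg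
      · refine ⟨fun t => if h : t ∈ T then g ⟨t, h⟩ else 0, ?_, ↑i₀, i₀.2, ?_⟩
        · rw [← Finset.sum_attach T fun t => (if h : t ∈ T then g ⟨t, h⟩ else 0) • t]
          have : ∀ t : {y // y ∈ T},
              (if h : (t : Fin n → ℝ) ∈ T then g ⟨t, h⟩ else 0) • (t : Fin n → ℝ)
                = g t • (t : Fin n → ℝ) := by
            intro t; rw [dif_pos t.2]
          rw [Finset.univ_eq_attach] at hg0
          simp only [this]
          exact hg0
        · show 0 < if h : (↑i₀ : Fin n → ℝ) ∈ T then g ⟨↑i₀, h⟩ else 0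
          rw [dif_pos i₀.2]; simpa using hpos
    set F := T.filter (fun t => 0 < dd t) with hF
    have hFne : F.Nonempty := ⟨t₁, Finset.mem_filter.2 ⟨ht₁T, hddt₁⟩⟩
    obtain ⟨t₀, ht₀F, hmin⟩ := F.exists_min_image (fun t => c t / dd t) hFne
    have ht₀T : t₀ ∈ T := (Finset.mem_filter.1 ht₀F).1
    have hddt₀ : 0 < dd t₀ := (Finset.mem_filter.1 ht₀F).2
    set lam := c t₀ / dd t₀ with hlam
    have hlam0 : 0 ≤ lam := div_nonneg (hc t₀ ht₀T) hddt₀.le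
    set c' : (Fin n → ℝ) → ℝ := fun t => c t - lam * dd t with hc'
    have hc'0 : ∀ t ∈ T, 0 ≤ c' t := by
      intro t ht
      by_cases hd : 0 < dd t
      · have := hmin t (Finset.mem_filter.2 ⟨ht, hd⟩)
        rw [le_div_iff₀ hd] at this
        simp only [hc']; linarith
      · push_neg at hd
        have : lam * dd t ≤ 0 := mul_nonpos_of_nonneg_of_nonpos hlam0 hd
        have := hc t ht
        simp only [hc']; linarith
    have hsum : ∑ t ∈ T, c' t • t = ∑ t ∈ T, c t • t := by
      simp only [hc', sub_smul, Finset.sum_sub_distrib]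
      have : ∑ t ∈ T, (lam * dd t) • t = lam • ∑ t ∈ T, dd t • t := by
        rw [Finset.smul_sum]
        exact Finset.sum_congr rfl fun t _ => by rw [smul_smul]
      rw [this, hdd0, smul_zero, sub_zero]
    have hzero : c' t₀ • t₀ = 0 := by
      have : c' t₀ = 0 := by
        simp only [hc', hlam]
        field_simp
        ring
      rw [this, zero_smul]
    have hmem : (∑ t ∈ T, c t • t) ∈ NNC (T.erase t₀) := by
      refine ⟨c', fun t ht => hc'0 t (Finset.mem_of_mem_erase ht), ?_⟩
      rw [Finset.sum_erase (f := fun t => c' t • t) T hzero]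
      exact hsum.symm
    obtain ⟨T', hT'sub, hT'li, hT'mem⟩ := ih (T.erase t₀) (Finset.erase_ssubset ht₀T) _ hmem
    exact ⟨T', hT'sub.trans (Finset.erase_subset _ _), hT'li, hT'mem⟩

end Stmt7Aux
namespace Stmt7Aux

variable {n : ℕ}

lemma isClosed_NNC {T : Finset (Fin n → ℝ)}
    (hli : LinearIndependent ℝ (fun t : {y // y ∈ T} => (t : Fin n → ℝ))) :
    IsClosed (NNC T) := by
  classical
  let f : ({y // y ∈ T} → ℝ) →ₗ[ℝ] (Fin n → ℝ) :=
    { toFun := fun c => ∑ t : {y // y ∈ T}, c t • (t : Fin n → ℝ)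
      map_add' := by
        intro a b
        simp [add_smul, Finset.sum_add_distrib]
      map_smul' := by
        intro m a
        simp [smul_smul, Finset.smul_sum] }
  have hker : LinearMap.ker f = ⊥ := by
    rw [LinearMap.ker_eq_bot']
    intro c hc
    funext t
    exact Fintype.linearIndependent_iff.1 hli c hc t
  have hemb := LinearMap.isClosedEmbedding_of_injective hker
  have himg : NNC T = f '' {c : {y // y ∈ T} → ℝ | ∀ t, 0 ≤ c t} := by
    ext x
    constructor
    · rintro ⟨c, hc, rfl⟩
      refine ⟨fun t => c ↑t, fun t => hc ↑t t.2, ?_⟩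
      show ∑ t : {y // y ∈ T}, c ↑t • (t : Fin n → ℝ) = ∑ t ∈ T, c t • t
      rw [Finset.univ_eq_attach]
      exact Finset.sum_attach T fun t => c t • t
    · rintro ⟨c, hc, rfl⟩
      refine ⟨fun t => if h : t ∈ T then c ⟨t, h⟩ else 0, fun t ht => ?_, ?_⟩
      · show (0:ℝ) ≤ if h : t ∈ T then c ⟨t, h⟩ else 0
        rw [dif_pos ht]; exact hc _
      · show f c = ∑ t ∈ T, (if h : t ∈ T then c ⟨t, h⟩ else 0) • t
        rw [← Finset.sum_attach T fun t => (if h : t ∈ T then c ⟨t, h⟩ else 0) • t]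
        show ∑ t : {y // y ∈ T}, c t • (t : Fin n → ℝ) = _
        rw [Finset.univ_eq_attach]
        refine Finset.sum_congr rfl fun t _ => ?_
        rw [dif_pos t.2]
  rw [himg]
  refine hemb.isClosedMap _ ?_
  have : {c : {y // y ∈ T} → ℝ | ∀ t, 0 ≤ c t} = ⋂ t, {c | 0 ≤ c t} := by
    ext c; simp [Set.mem_iInter]
  rw [this]
  exact isClosed_iInter fun t => IsClosed.preimage (continuous_apply t) isClosed_Ici

lemma isClosed_PLC (S : Finset (Fin n → ℝ)) :
    IsClosed (PLC (↑S : Set (Fin n → ℝ))) := by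
  have hrw : PLC (↑S : Set (Fin n → ℝ)) =
      ⋃ T ∈ {T : Finset (Fin n → ℝ) | T ⊆ S ∧
        LinearIndependent ℝ (fun t : {y // y ∈ T} => (t : Fin n → ℝ))}, NNC T := by
    ext x
    constructor
    · intro hx
      obtain ⟨T', hsub, hli, hmem⟩ := cara S x (PLC_subset_NNC hx)
      exact Set.mem_biUnion ⟨hsub, hli⟩ hmem
    · intro hx
      simp only [Set.mem_iUnion, Set.mem_setOf_eq] at hx
      obtain ⟨T, ⟨hsub, -⟩, hmem⟩ := hx
      exact NNC_subset_PLC (fun t ht => Finset.mem_coe.2 (hsub (Finset.mem_coe.1 ht))) hmem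
  rw [hrw]
  refine Set.Finite.isClosed_biUnion ?_ fun T hT => isClosed_NNC hT.2
  exact (S.powerset.finite_toSet).subset fun T hT => Finset.mem_coe.2 (Finset.mem_powerset.2 hT.1)

end Stmt7Aux
namespace Stmt7Aux

variable {n : ℕ}

lemma dot_comm (a b : Fin n → ℝ) : dot a b = dot b a := by
  simp [dot, mul_comm]

lemma dot_smul_right (a : Fin n → ℝ) (c : ℝ) (x : Fin n → ℝ) :
    dot a (c • x) = c * dot a x := by
  rw [dot, dot, Finset.mul_sum]
  exact Finset.sum_congr rfl fun i _ => by simp; ring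

open scoped InnerProductSpace in
lemma euclid_inner_eq_dot (x y : EuclideanSpace ℝ (Fin n)) :
    ⟪x, y⟫_ℝ = dot (fun i => x i) (fun i => y i) := by
  rw [PiLp.inner_apply]
  simp [RCLike.inner_apply, dot]
  exact Finset.sum_congr rfl fun i _ => mul_comm _ _

/-- Separation : if `α₀` is not a positive combination of the finite set `S`,
then some vector `y` has nonnegative inner product with all of `S` but negative
with `α₀`. -/
lemma farkas {S₀ : Set (Fin n → ℝ)} (hfin : S₀.Finite) {α₀ : Fin n → ℝ}
    (hnot : α₀ ∉ PLC S₀) :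
    ∃ y : Fin n → ℝ, (∀ α ∈ S₀, 0 ≤ dot α y) ∧ dot α₀ y < 0 := by
  classical
  set S : Finset (Fin n → ℝ) := hfin.toFinset with hS
  have hSc : (↑S : Set (Fin n → ℝ)) = S₀ := hfin.coe_toFinset
  let e := EuclideanSpace.equiv (Fin n) ℝ
  let C : Set (EuclideanSpace ℝ (Fin n)) := (⇑e) ⁻¹' (PLC S₀)
  have hCcl : IsClosed C := by
    have := isClosed_PLC S
    rw [hSc] at this
    exact this.preimage e.continuous
  let K : ConvexCone ℝ (EuclideanSpace ℝ (Fin n)) :=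
    { carrier := C
      smul_mem' := by
        intro c hc x hx
        show e (c • x) ∈ PLC S₀
        rw [map_smul]
        exact PLC_smul hx hc
      add_mem' := by
        intro x hx y hy
        show e (x + y) ∈ PLC S₀
        rw [map_add]
        exact PLC_add hx hy }
  have hne : (K : Set (EuclideanSpace ℝ (Fin n))).Nonempty := by
    refine ⟨0, ?_⟩
    show e 0 ∈ PLC S₀
    rw [map_zero]
    exact zero_mem_PLC S₀
  have hdisj : e.symm α₀ ∉ K := by
    intro hmem
    have : e (e.symm α₀) ∈ PLC S₀ := hmem
    rw [e.apply_symm_apply] at this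
    exact hnot this
  obtain ⟨y, hy1, hy2⟩ : ∃ y : EuclideanSpace ℝ (Fin n),
      (∀ x ∈ K, 0 ≤ inner ℝ x y) ∧ inner ℝ y (e.symm α₀) < 0 := by
    let C' : ProperCone ℝ (EuclideanSpace ℝ (Fin n)) :=
      { carrier := C
        add_mem' := fun hx hy => K.add_mem' hx hy
        zero_mem' := hne.mono (fun _ h => h) |>.elim fun _ _ => by
          show e 0 ∈ PLC S₀
          rw [map_zero]
          exact zero_mem_PLC S₀
        smul_mem' := by
          intro c x hx
          show e ((c.1 : ℝ) • x) ∈ PLC S₀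
          rcases eq_or_lt_of_le c.2 with h0 | hpos
          · rw [← h0, zero_smul]
            rw [map_zero]
            exact zero_mem_PLC S₀
          · exact K.smul_mem' hpos hx
        isClosed' := hCcl }
    obtain ⟨y, hy1, hy2⟩ := C'.hyperplane_separation' (x₀ := e.symm α₀) hdisj
    exact ⟨y, fun x hx => hy1 x hx, by rw [real_inner_comm]; exact hy2⟩
  refine ⟨fun i => y i, fun α hα => ?_, ?_⟩
  · have hmem : e.symm α ∈ K := by
      show e (e.symm α) ∈ PLC S₀
      rw [e.apply_symm_apply]
      exact mem_PLC hα
    have := hy1 _ hmem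
    rw [euclid_inner_eq_dot] at this
    convert this using 2 <;> (funext i; exact (congrFun (e.apply_symm_apply α) i).symm)
  · have := hy2
    rw [euclid_inner_eq_dot] at this
    rw [dot_comm]
    convert this using 2 <;> (funext i; exact (congrFun (e.apply_symm_apply α₀) i).symm)

lemma part2 {P M : Set (Fin n → ℝ)} (hP : IsSignedPoset P) (hM : IsMinrep P M)
    {α₀ : Fin n → ℝ} (hα₀ : α₀ ∈ M) :
    polyOf (M \ {α₀}) {i | PMax P i} {i | NMax P i} ≠ orderPolytope P := by
  have hα₀P : α₀ ∈ P := hM.1.1 hα₀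
  have hnot : α₀ ∉ PLC (M \ {α₀}) := by
    intro hin
    have hgen : GenBy (M \ {α₀}) P := by
      refine ⟨Set.diff_subset.trans hM.1.1, fun β hβ => ?_⟩
      refine PLC_sub_self (fun γ hγ => ?_) (hM.1.2 β hβ)
      by_cases hγ0 : γ = α₀
      · exact hγ0 ▸ hin
      · exact mem_PLC ⟨hγ, hγ0⟩
    exact (hM.2 _ hgen hα₀).2 rfl
  have hfin : (M \ {α₀} : Set (Fin n → ℝ)).Finite :=
    Bn_finite.subset fun a ha => hP.1 (hM.1.1 ha.1)
  obtain ⟨y, hy1, hy2⟩ := farkas hfin hnot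
  -- scale down into the box
  set s : ℝ := ∑ i, |y i| with hs
  have hs0 : 0 ≤ s := Finset.sum_nonneg fun i _ => abs_nonneg _
  set t : ℝ := (1 + s)⁻¹ with ht
  have ht0 : 0 < t := by rw [ht]; positivity
  have hbound : ∀ i, |t * y i| ≤ 1 := by
    intro i
    have h1 : |y i| ≤ s := Finset.single_le_sum (fun j _ => abs_nonneg (y j)) (Finset.mem_univ i)
    rw [abs_mul, abs_of_pos ht0]
    have h2 : t * |y i| ≤ t * (1 + s) := by
      apply mul_le_mul_of_nonneg_left _ ht0.le
      linarith
    rw [ht, inv_mul_cancel₀ (by linarith : (1:ℝ) + s ≠ 0)] at h2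
    exact h2
  intro heq
  have hxpoly : t • y ∈ polyOf (M \ {α₀}) {i | PMax P i} {i | NMax P i} := by
    refine ⟨fun α hα => ?_, fun i _ => ?_, fun i _ => ?_⟩
    · rw [dot_smul_right]
      exact mul_nonneg ht0.le (hy1 α hα)
    · have := (abs_le.1 (hbound i)).2
      simpa using this
    · have := (abs_le.1 (hbound i)).1
      simpa using this
  rw [heq] at hxpoly
  have := hxpoly.1 α₀ hα₀P
  rw [dot_smul_right] at this
  nlinarith

end Stmt7Aux
/-- the inequalities `⟨α,x⟩ ≥ 0` for `α ∈ minrep(P)`, `x_i ≤ 1` for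
positive maximal `i`, `x_i ≥ -1` for negative maximal `i` give an irredundant
description of `O_P`. -/
theorem stmt7 {n : ℕ} (P M : Set (Fin n → ℝ)) (hP : IsSignedPoset P)
    (hM : IsMinrep P M) :
    polyOf M {i | PMax P i} {i | NMax P i} = orderPolytope P ∧
    (∀ α₀ ∈ M, polyOf (M \ {α₀}) {i | PMax P i} {i | NMax P i} ≠ orderPolytope P) ∧
    (∀ i₀, PMax P i₀ →
      polyOf M ({i | PMax P i} \ {i₀}) {i | NMax P i} ≠ orderPolytope P) ∧
    (∀ i₀, NMax P i₀ →
      polyOf M {i | PMax P i} ({i | NMax P i} \ {i₀}) ≠ orderPolytope P) :=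
  ⟨Stmt7Aux.part1 hP hM, fun _ hα₀ => Stmt7Aux.part2 hP hM hα₀,
    fun i₀ h => Stmt7Aux.part3 hP hM i₀ h, fun i₀ h => Stmt7Aux.part4 hP hM i₀ h⟩
end
end

section
/- For a signed poset P on [n], if i ∈ [n] is a positive maximal element of P, then the inequality x_i ≤ 1 cannot be omitted from the description of O_P: no combination of the inequalities ⟨α, x⟩ ≥ 0 for α ∈ P implies x_i ≤ 1, since all relations of P adjacent to i have positive e_i-coefficient. -/
open Finset Pointwise

noncomputable section
attribute [local instance] Classical.propDecidable

/-- if `i` is a positive maximal element, the inequality `x_i ≤ 1`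
cannot be omitted from the description of `O_P`. -/
theorem stmt8 {n : ℕ} (P : Set (Fin n → ℝ)) (hP : IsSignedPoset P) (i : Fin n)
    (hi : ∀ α ∈ P, α i ≠ 0 → α i = 1) :
    ∃ x : Fin n → ℝ, (∀ α ∈ P, 0 ≤ dot α x) ∧
      (∀ j : Fin n, j ≠ i → -1 ≤ x j ∧ x j ≤ 1) ∧ 1 < x i := by
  refine ⟨fun j => if j = i then 2 else 0, ?_, ?_, by simp⟩
  · intro α hα
    have hd : dot α (fun j => if j = i then 2 else 0) = α i * 2 := by
      unfold dot
      rw [Finset.sum_eq_single i]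
      · simp
      · intro b _ hb; simp [hb]
      · simp
    rw [hd]
    rcases eq_or_ne (α i) 0 with h | h
    · simp [h]
    · rw [hi α hα h]; norm_num
  · intro j hj; simp [hj]
end
end

section
/- Let P be a signed poset on [n] and let F be the set of signed filters of P, i.e., points x ∈ {-1,0,1}^n with ⟨α, x⟩ ≥ 0 for all α ∈ P. Then the signed order polytope O_P equals the convex hull of F. -/
open Finset Pointwise

noncomputable section
attribute [local instance] Classical.propDecidable

lemma dot_ee {n : ℕ} (i : Fin n) (x : Fin n → ℝ) : dot (ee n i) x = x i := by
  simp [dot, ee, Finset.sum_ite_eq]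

lemma dot_neg {n : ℕ} (α x : Fin n → ℝ) : dot (-α) x = - dot α x := by
  simp [dot, neg_mul, Finset.sum_neg_distrib]

lemma dot_add {n : ℕ} (α β x : Fin n → ℝ) : dot (α + β) x = dot α x + dot β x := by
  simp [dot, add_mul, Finset.sum_add_distrib]

lemma dot_sub {n : ℕ} (α β x : Fin n → ℝ) : dot (α - β) x = dot α x - dot β x := by
  simp [dot, sub_mul, Finset.sum_sub_distrib]

lemma dot_linear {n : ℕ} (α x y : Fin n → ℝ) (a b : ℝ) :
    dot α (a • x + b • y) = a * dot α x + b * dot α y := by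
  simp only [dot, Pi.add_apply, Pi.smul_apply, smul_eq_mul, Finset.mul_sum]
  rw [← Finset.sum_add_distrib]
  apply Finset.sum_congr rfl
  intros; ring

lemma cone_map {n : ℕ} {P : Set (Fin n → ℝ)} (hPB : P ⊆ Bn n)
    {x : Fin n → ℝ} (hx : ∀ α ∈ P, 0 ≤ dot α x)
    (g : ℝ → ℝ) (hg0 : g 0 = 0) (hodd : ∀ v, g (-v) = - g v)
    (hmono : ∀ u v : ℝ, (u = 0 ∨ ∃ i, u = x i ∨ u = - x i) →
       (v = 0 ∨ ∃ i, v = x i ∨ v = - x i) → u ≤ v → g u ≤ g v) :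
    ∀ α ∈ P, 0 ≤ dot α (fun i => g (x i)) := by
  intro α hα
  have h := hx α hα
  rcases hPB hα with ⟨i, rfl | rfl⟩ | ⟨i, j, hij, rfl | rfl | rfl | rfl⟩
  · simp only [dot_ee] at h ⊢
    have := hmono 0 (x i) (Or.inl rfl) (Or.inr ⟨i, Or.inl rfl⟩) h
    rwa [hg0] at this
  · simp only [dot_neg, dot_ee] at h ⊢
    have hx0 : x i ≤ 0 := by linarith
    have := hmono (x i) 0 (Or.inr ⟨i, Or.inl rfl⟩) (Or.inl rfl) hx0
    rw [hg0] at this; linarith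
  · simp only [dot_add, dot_ee] at h ⊢
    have h1 : -x j ≤ x i := by linarith
    have := hmono (-x j) (x i) (Or.inr ⟨j, Or.inr rfl⟩) (Or.inr ⟨i, Or.inl rfl⟩) h1
    rw [hodd] at this; linarith
  · simp only [dot_sub, dot_neg, dot_ee] at h ⊢
    have h1 : x i ≤ -x j := by linarith
    have := hmono (x i) (-x j) (Or.inr ⟨i, Or.inl rfl⟩) (Or.inr ⟨j, Or.inr rfl⟩) h1
    rw [hodd] at this; linarith
  · simp only [dot_sub, dot_ee] at h ⊢
    have h1 : x j ≤ x i := by linarith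
    have := hmono (x j) (x i) (Or.inr ⟨j, Or.inl rfl⟩) (Or.inr ⟨i, Or.inl rfl⟩) h1
    linarith
  · simp only [dot_add, dot_neg, dot_ee] at h ⊢
    have h1 : x i ≤ x j := by linarith
    have := hmono (x i) (x j) (Or.inr ⟨i, Or.inl rfl⟩) (Or.inr ⟨j, Or.inl rfl⟩) h1
    linarith

def Fset {n : ℕ} (P : Set (Fin n → ℝ)) : Set (Fin n → ℝ) :=
  {x | (∀ i, x i = -1 ∨ x i = 0 ∨ x i = 1) ∧ ∀ α ∈ P, 0 ≤ dot α x}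

def fracVals {n : ℕ} (x : Fin n → ℝ) : Finset ℝ :=
  (Finset.univ.image (fun i => |x i|)).filter (fun v => v ≠ 0 ∧ v ≠ 1)

lemma key {n : ℕ} {P : Set (Fin n → ℝ)} (hPB : P ⊆ Bn n) :
    ∀ N : ℕ, ∀ x : Fin n → ℝ, (fracVals x).card ≤ N →
      ((∀ α ∈ P, 0 ≤ dot α x) ∧ ∀ i, -1 ≤ x i ∧ x i ≤ 1) →
      x ∈ convexHull ℝ (Fset P) := by
  intro N
  induction N with
  | zero =>
    intro x hcard hx
    apply subset_convexHull
    refine ⟨?_, hx.1⟩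
    intro i
    have h1 : |x i| ∈ Finset.univ.image (fun i => |x i|) :=
      Finset.mem_image_of_mem _ (Finset.mem_univ i)
    have h2 : ¬(|x i| ≠ 0 ∧ |x i| ≠ 1) := by
      intro hc
      have hmem : |x i| ∈ fracVals x := Finset.mem_filter.2 ⟨h1, hc⟩
      have := Finset.card_pos.2 ⟨_, hmem⟩
      omega
    by_cases h0 : |x i| = 0
    · right; left; exact abs_eq_zero.1 h0
    · have h1' : |x i| = 1 := by tauto
      rcases (abs_eq (by norm_num : (0:ℝ) ≤ 1)).1 h1' with h | h
      · right; right; exact h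
      · left; exact h
  | succ N ih =>
    intro x hcard hx
    by_cases hall : ∀ i, x i = -1 ∨ x i = 0 ∨ x i = 1
    · exact subset_convexHull ℝ _ ⟨hall, hx.1⟩
    push_neg at hall
    obtain ⟨i0, hi0⟩ := hall
    set s : ℝ := |x i0| with hs_def
    have hxb := hx.2 i0
    have hs_pos : 0 < s := abs_pos.2 hi0.2.1
    have hs_le1 : s ≤ 1 := abs_le.2 ⟨hxb.1, hxb.2⟩
    have hs_ne1 : s ≠ 1 := by
      intro h
      rcases (abs_eq (by norm_num : (0:ℝ) ≤ 1)).1 h with h' | h'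
      · exact hi0.2.2 h'
      · exact hi0.1 h'
    have hs_lt1 : s < 1 := lt_of_le_of_ne hs_le1 hs_ne1
    set absVals : Finset ℝ := Finset.univ.image (fun i => |x i|) with hav_def
    -- upper threshold
    have h1up : (1:ℝ) ∈ (insert (1:ℝ) absVals).filter (fun v => s < v) :=
      Finset.mem_filter.2 ⟨Finset.mem_insert_self _ _, hs_lt1⟩
    set t' : ℝ := ((insert (1:ℝ) absVals).filter (fun v => s < v)).min' ⟨1, h1up⟩ with ht'_def
    have ht'_mem := Finset.min'_mem ((insert (1:ℝ) absVals).filter (fun v => s < v)) ⟨1, h1up⟩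
    have ht'_gt : s < t' := (Finset.mem_filter.1 ht'_mem).2
    have ht'_cases : t' = 1 ∨ t' ∈ absVals := Finset.mem_insert.1 (Finset.mem_filter.1 ht'_mem).1
    have ht'_le1 : t' ≤ 1 := Finset.min'_le _ _ h1up
    have gapUp : ∀ i, s < |x i| → t' ≤ |x i| := by
      intro i h
      exact Finset.min'_le _ _ (Finset.mem_filter.2
        ⟨Finset.mem_insert_of_mem (Finset.mem_image_of_mem _ (Finset.mem_univ i)), h⟩)
    -- lower threshold
    have h0down : (0:ℝ) ∈ (insert (0:ℝ) absVals).filter (fun v => v < s) :=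
      Finset.mem_filter.2 ⟨Finset.mem_insert_self _ _, hs_pos⟩
    set t'' : ℝ := ((insert (0:ℝ) absVals).filter (fun v => v < s)).max' ⟨0, h0down⟩ with ht''_def
    have ht''_mem := Finset.max'_mem ((insert (0:ℝ) absVals).filter (fun v => v < s)) ⟨0, h0down⟩
    have ht''_lt : t'' < s := (Finset.mem_filter.1 ht''_mem).2
    have ht''_cases : t'' = 0 ∨ t'' ∈ absVals := Finset.mem_insert.1 (Finset.mem_filter.1 ht''_mem).1
    have ht''_ge0 : 0 ≤ t'' := by
      rw [ht''_def]
      exact Finset.le_max' _ 0 h0down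
    have gapDown : ∀ i, |x i| < s → |x i| ≤ t'' := by
      intro i h
      rw [ht''_def]
      apply Finset.le_max'
      simp only [Finset.mem_filter, Finset.mem_insert]
      exact ⟨Or.inr (Finset.mem_image_of_mem _ (Finset.mem_univ i)), h⟩
    -- the two pushed maps
    set ga : ℝ → ℝ := fun v => if v = s then t' else if v = -s then -t' else v with hga_def
    set gb : ℝ → ℝ := fun v => if v = s then t'' else if v = -s then -t'' else v with hgb_def
    have hga0 : ga 0 = 0 := by
      simp only [hga_def]
      rw [if_neg (by intro h; linarith), if_neg (by intro h; linarith)]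
    have hgb0 : gb 0 = 0 := by
      simp only [hgb_def]
      rw [if_neg (by intro h; linarith), if_neg (by intro h; linarith)]
    have hgaodd : ∀ v, ga (-v) = - ga v := by
      intro v
      by_cases h1 : v = s
      · simp only [hga_def]
        rw [if_pos h1, if_neg (by intro h; rw [h1] at h; linarith),
          if_pos (by rw [h1])]
      · by_cases h2 : v = -s
        · simp only [hga_def]
          rw [if_neg h1, if_pos h2, if_pos (by rw [h2]; ring), neg_neg]
        · simp only [hga_def]
          rw [if_neg h1, if_neg h2, if_neg (by intro h; exact h2 (by linarith)),
            if_neg (by intro h; exact h1 (by linarith))]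
    have hgbodd : ∀ v, gb (-v) = - gb v := by
      intro v
      by_cases h1 : v = s
      · simp only [hgb_def]
        rw [if_pos h1, if_neg (by intro h; rw [h1] at h; linarith),
          if_pos (by rw [h1])]
      · by_cases h2 : v = -s
        · simp only [hgb_def]
          rw [if_neg h1, if_pos h2, if_pos (by rw [h2]; ring), neg_neg]
        · simp only [hgb_def]
          rw [if_neg h1, if_neg h2, if_neg (by intro h; exact h2 (by linarith)),
            if_neg (by intro h; exact h1 (by linarith))]
    have habsU : ∀ w : ℝ, (w = 0 ∨ ∃ i, w = x i ∨ w = - x i) → s < |w| → t' ≤ |w| := by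
      intro w hw hsw
      rcases hw with rfl | ⟨i, rfl | rfl⟩
      · simp only [abs_zero] at hsw; linarith
      · exact gapUp i hsw
      · rw [abs_neg] at hsw ⊢; exact gapUp i hsw
    have habsD : ∀ w : ℝ, (w = 0 ∨ ∃ i, w = x i ∨ w = - x i) → |w| < s → |w| ≤ t'' := by
      intro w hw hsw
      rcases hw with rfl | ⟨i, rfl | rfl⟩
      · simp only [abs_zero]; exact ht''_ge0
      · exact gapDown i hsw
      · rw [abs_neg] at hsw ⊢; exact gapDown i hsw
    have hmono_a : ∀ u v : ℝ, (u = 0 ∨ ∃ i, u = x i ∨ u = - x i) →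
        (v = 0 ∨ ∃ i, v = x i ∨ v = - x i) → u ≤ v → ga u ≤ ga v := by
      intro u v hu hv huv
      by_cases h1 : u = s
      · by_cases h2 : v = s
        · simp only [hga_def]; rw [if_pos h1, if_pos h2]
        · have h3 : v ≠ -s := by intro h; rw [h1, h] at huv; linarith
          have hvgt : s < v := lt_of_le_of_ne (h1 ▸ huv) (Ne.symm h2)
          have hle : t' ≤ v := by
            have := habsU v hv (by rw [abs_of_pos (by linarith)]; exact hvgt)
            rwa [abs_of_pos (by linarith)] at this
          simp only [hga_def]; rw [if_pos h1, if_neg h2, if_neg h3]; exact hle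
      · by_cases h1' : u = -s
        · by_cases h2 : v = s
          · simp only [hga_def]; rw [if_neg h1, if_pos h1', if_pos h2]; linarith
          · by_cases h3 : v = -s
            · simp only [hga_def]; rw [if_neg h1, if_pos h1', if_neg h2, if_pos h3]
            · have hvgt : -s < v := lt_of_le_of_ne (h1' ▸ huv) (Ne.symm h3)
              simp only [hga_def]; rw [if_neg h1, if_pos h1', if_neg h2, if_neg h3]
              linarith
        · by_cases h2 : v = s
          · simp only [hga_def]; rw [if_neg h1, if_neg h1', if_pos h2]
            rw [h2] at huv; linarith
          · by_cases h3 : v = -s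
            · have hune : u ≠ v := fun h => h1' (by rw [h, h3])
              have hult : u < -s := h3 ▸ lt_of_le_of_ne huv hune
              have habs' : t' ≤ -u := by
                have := habsU u hu (by rw [abs_of_neg (by linarith)]; linarith)
                rwa [abs_of_neg (by linarith)] at this
              simp only [hga_def]; rw [if_neg h1, if_neg h1', if_neg h2, if_pos h3]
              linarith
            · simp only [hga_def]; rw [if_neg h1, if_neg h1', if_neg h2, if_neg h3]
              exact huv
    have hmono_b : ∀ u v : ℝ, (u = 0 ∨ ∃ i, u = x i ∨ u = - x i) →
        (v = 0 ∨ ∃ i, v = x i ∨ v = - x i) → u ≤ v → gb u ≤ gb v := by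
      intro u v hu hv huv
      by_cases h1 : u = s
      · by_cases h2 : v = s
        · simp only [hgb_def]; rw [if_pos h1, if_pos h2]
        · have h3 : v ≠ -s := by intro h; rw [h1, h] at huv; linarith
          have hvgt : s < v := lt_of_le_of_ne (h1 ▸ huv) (Ne.symm h2)
          simp only [hgb_def]; rw [if_pos h1, if_neg h2, if_neg h3]; linarith
      · by_cases h1' : u = -s
        · by_cases h2 : v = s
          · simp only [hgb_def]; rw [if_neg h1, if_pos h1', if_pos h2]; linarith
          · by_cases h3 : v = -s
            · simp only [hgb_def]; rw [if_neg h1, if_pos h1', if_neg h2, if_pos h3]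
            · have hvgt : -s < v := lt_of_le_of_ne (h1' ▸ huv) (Ne.symm h3)
              simp only [hgb_def]; rw [if_neg h1, if_pos h1', if_neg h2, if_neg h3]
              by_cases hv0 : v < 0
              · have := habsD v hv (by rw [abs_of_neg hv0]; linarith)
                rw [abs_of_neg hv0] at this; linarith
              · linarith
        · by_cases h2 : v = s
          · have hult : u < s := lt_of_le_of_ne (h2 ▸ huv) h1
            simp only [hgb_def]; rw [if_neg h1, if_neg h1', if_pos h2]
            by_cases hu0 : 0 < u
            · have := habsD u hu (by rw [abs_of_pos hu0]; linarith)
              rwa [abs_of_pos hu0] at this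
            · linarith
          · by_cases h3 : v = -s
            · have hune : u ≠ v := fun h => h1' (by rw [h, h3])
              have hult : u < -s := h3 ▸ lt_of_le_of_ne huv hune
              simp only [hgb_def]; rw [if_neg h1, if_neg h1', if_neg h2, if_pos h3]
              linarith
            · simp only [hgb_def]; rw [if_neg h1, if_neg h1', if_neg h2, if_neg h3]
              exact huv
    -- membership of the pushed points in the polytope
    have ha_cone : ∀ α ∈ P, 0 ≤ dot α (fun i => ga (x i)) :=
      cone_map hPB hx.1 ga hga0 hgaodd hmono_a
    have hb_cone : ∀ α ∈ P, 0 ≤ dot α (fun i => gb (x i)) :=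
      cone_map hPB hx.1 gb hgb0 hgbodd hmono_b
    have ha_box : ∀ i, -1 ≤ ga (x i) ∧ ga (x i) ≤ 1 := by
      intro i
      by_cases h1 : x i = s
      · simp only [hga_def]; rw [if_pos h1]; constructor <;> linarith
      · by_cases h2 : x i = -s
        · simp only [hga_def]; rw [if_neg h1, if_pos h2]; constructor <;> linarith
        · simp only [hga_def]; rw [if_neg h1, if_neg h2]; exact hx.2 i
    have hb_box : ∀ i, -1 ≤ gb (x i) ∧ gb (x i) ≤ 1 := by
      intro i
      by_cases h1 : x i = s
      · simp only [hgb_def]; rw [if_pos h1]; constructor <;> linarith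
      · by_cases h2 : x i = -s
        · simp only [hgb_def]; rw [if_neg h1, if_pos h2]; constructor <;> linarith
        · simp only [hgb_def]; rw [if_neg h1, if_neg h2]; exact hx.2 i
    -- fracVals decrease
    have hs_mem : s ∈ fracVals x :=
      Finset.mem_filter.2 ⟨Finset.mem_image_of_mem _ (Finset.mem_univ i0),
        ⟨ne_of_gt hs_pos, hs_ne1⟩⟩
    have hsub_a : fracVals (fun i => ga (x i)) ⊆ (fracVals x).erase s := by
      intro v hv
      obtain ⟨hv1, hv2⟩ := Finset.mem_filter.1 hv
      obtain ⟨i, -, hvi0⟩ := Finset.mem_image.1 hv1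
      have hvi : |ga (x i)| = v := hvi0
      clear hvi0
      by_cases h1 : x i = s
      · have hval : ga (x i) = t' := by simp only [hga_def]; rw [if_pos h1]
        rw [hval, abs_of_pos (by linarith)] at hvi
        rcases ht'_cases with h | h
        · exact absurd (by rw [← hvi, h]) hv2.2
        · exact Finset.mem_erase.2 ⟨by rw [← hvi]; intro hc; linarith,
            Finset.mem_filter.2 ⟨hvi ▸ h, hv2⟩⟩
      · by_cases h2 : x i = -s
        · have hval : ga (x i) = -t' := by simp only [hga_def]; rw [if_neg h1, if_pos h2]
          rw [hval, abs_of_neg (by linarith), neg_neg] at hvi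
          rcases ht'_cases with h | h
          · exact absurd (by rw [← hvi, h]) hv2.2
          · exact Finset.mem_erase.2 ⟨by rw [← hvi]; intro hc; linarith,
              Finset.mem_filter.2 ⟨hvi ▸ h, hv2⟩⟩
        · have hval : ga (x i) = x i := by simp only [hga_def]; rw [if_neg h1, if_neg h2]
          rw [hval] at hvi
          refine Finset.mem_erase.2 ⟨?_, Finset.mem_filter.2
            ⟨hvi ▸ Finset.mem_image_of_mem _ (Finset.mem_univ i), hv2⟩⟩
          rw [← hvi]
          intro hc
          rcases (abs_eq (le_of_lt hs_pos)).1 hc with h | h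
          · exact h1 h
          · exact h2 h
    have hsub_b : fracVals (fun i => gb (x i)) ⊆ (fracVals x).erase s := by
      intro v hv
      obtain ⟨hv1, hv2⟩ := Finset.mem_filter.1 hv
      obtain ⟨i, -, hvi0⟩ := Finset.mem_image.1 hv1
      have hvi : |gb (x i)| = v := hvi0
      clear hvi0
      by_cases h1 : x i = s
      · have hval : gb (x i) = t'' := by simp only [hgb_def]; rw [if_pos h1]
        rw [hval] at hvi
        rcases ht''_cases with h | h
        · exact absurd (by rw [← hvi, h, abs_zero]) hv2.1
        · rw [abs_of_nonneg ht''_ge0] at hvi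
          exact Finset.mem_erase.2 ⟨by rw [← hvi]; intro hc; linarith,
            Finset.mem_filter.2 ⟨hvi ▸ h, hv2⟩⟩
      · by_cases h2 : x i = -s
        · have hval : gb (x i) = -t'' := by simp only [hgb_def]; rw [if_neg h1, if_pos h2]
          rw [hval, abs_neg] at hvi
          rcases ht''_cases with h | h
          · exact absurd (by rw [← hvi, h, abs_zero]) hv2.1
          · rw [abs_of_nonneg ht''_ge0] at hvi
            exact Finset.mem_erase.2 ⟨by rw [← hvi]; intro hc; linarith,
              Finset.mem_filter.2 ⟨hvi ▸ h, hv2⟩⟩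
        · have hval : gb (x i) = x i := by simp only [hgb_def]; rw [if_neg h1, if_neg h2]
          rw [hval] at hvi
          refine Finset.mem_erase.2 ⟨?_, Finset.mem_filter.2
            ⟨hvi ▸ Finset.mem_image_of_mem _ (Finset.mem_univ i), hv2⟩⟩
          rw [← hvi]
          intro hc
          rcases (abs_eq (le_of_lt hs_pos)).1 hc with h | h
          · exact h1 h
          · exact h2 h
    have hcard_a : (fracVals (fun i => ga (x i))).card ≤ N := by
      have h1 := Finset.card_le_card hsub_a
      rw [Finset.card_erase_of_mem hs_mem] at h1
      have h2 := Finset.card_pos.2 ⟨_, hs_mem⟩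
      omega
    have hcard_b : (fracVals (fun i => gb (x i))).card ≤ N := by
      have h1 := Finset.card_le_card hsub_b
      rw [Finset.card_erase_of_mem hs_mem] at h1
      have h2 := Finset.card_pos.2 ⟨_, hs_mem⟩
      omega
    have ha : (fun i => ga (x i)) ∈ convexHull ℝ (Fset P) := ih _ hcard_a ⟨ha_cone, ha_box⟩
    have hb : (fun i => gb (x i)) ∈ convexHull ℝ (Fset P) := ih _ hcard_b ⟨hb_cone, hb_box⟩
    -- convex combination
    have hd : (0:ℝ) < t' - t'' := by linarith
    have hd' : t' - t'' ≠ 0 := ne_of_gt hd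
    set lam : ℝ := (s - t'') / (t' - t'') with hlam_def
    set mu : ℝ := (t' - s) / (t' - t'') with hmu_def
    have hlam : 0 ≤ lam := div_nonneg (by linarith) (by linarith)
    have hmu : 0 ≤ mu := div_nonneg (by linarith) (by linarith)
    have hsum : lam + mu = 1 := by
      rw [hlam_def, hmu_def, ← add_div]
      field_simp
      ring
    have hx_eq : x = lam • (fun i => ga (x i)) + mu • (fun i => gb (x i)) := by
      funext i
      simp only [Pi.add_apply, Pi.smul_apply, smul_eq_mul]
      by_cases h1 : x i = s
      · simp only [hga_def, hgb_def]; rw [if_pos h1, if_pos h1, h1, hlam_def, hmu_def]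
        field_simp; ring
      · by_cases h2 : x i = -s
        · simp only [hga_def, hgb_def]
          rw [if_neg h1, if_pos h2, if_neg h1, if_pos h2, h2, hlam_def, hmu_def]
          field_simp; ring
        · simp only [hga_def, hgb_def]; rw [if_neg h1, if_neg h2, if_neg h1, if_neg h2]
          linear_combination (-(x i)) * hsum
    rw [hx_eq]
    exact (convex_convexHull ℝ (Fset P)) ha hb hlam hmu hsum


/-- `O_P` is the convex hull of the signed filters of `P`. -/
theorem stmt9 {n : ℕ} (P : Set (Fin n → ℝ)) (hP : IsSignedPoset P) :
    orderPolytope P =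
      convexHull ℝ {x : Fin n → ℝ | (∀ i, x i = -1 ∨ x i = 0 ∨ x i = 1) ∧
        ∀ α ∈ P, 0 ≤ dot α x} := by
  apply Set.Subset.antisymm
  · intro x hx
    exact key hP.1 _ x le_rfl hx
  · apply convexHull_min
    · rintro x ⟨h1, h2⟩
      refine ⟨h2, fun i => ?_⟩
      rcases h1 i with h | h | h <;> rw [h] <;> norm_num
    · intro y hy z hz c d hc hd hcd
      refine ⟨?_, ?_⟩
      · intro α hα
        rw [dot_linear]
        exact add_nonneg (mul_nonneg hc (hy.1 α hα)) (mul_nonneg hd (hz.1 α hα))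
      · intro i
        simp only [Pi.add_apply, Pi.smul_apply, smul_eq_mul]
        obtain ⟨hy1, hy2⟩ := hy.2 i
        obtain ⟨hz1, hz2⟩ := hz.2 i
        constructor <;> nlinarith
end
end

section
/- Let σ = (π, ε) ∈ S_n^B and let p = (1/(n+1), 2/(n+1), ..., n/(n+1)). For the simplex Δ_σ = {x : 0 ≤ ε_1 x_{π_1} ≤ ... ≤ ε_n x_{π_n} ≤ 1}, the point p is beyond the facet {ε_i x_{π_i} = ε_{i+1} x_{π_{i+1}}} if and only if σ(i) > σ(i+1), the point p is beyond the facet {ε_1 x_{π_1} = 0} if and only if σ(1) < 0, and p is never beyond the facet {ε_n x_{π_n} = 1}. Consequently, the half-open simplex H_p Δ_σ has exactly natdes(σ) removed facets, where natdes(σ) = |{i ∈ {0,...,n-1} : σ(i) > σ(i+1)}| with the convention σ(0) = 0. -/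
open Finset Pointwise

noncomputable section
attribute [local instance] Classical.propDecidable

/-- A signed permutation on `[n]`, encoded as the underlying permutation `π`
(`π i = |ω(i)|`, zero-indexed) together with the signs (`true` means negative). -/
abbrev SignedPerm (n : ℕ) := Equiv.Perm (Fin n) × (Fin n → Bool)

/-- The sign `ε_i` of a signed permutation. -/
def sgn {n : ℕ} (σ : SignedPerm n) (i : Fin n) : ℝ := if σ.2 i then -1 else 1

/-- The signed permutation `σ` viewed as the point `(σ(1), ..., σ(n)) ∈ ℝ^n`. -/
def spt {n : ℕ} (σ : SignedPerm n) : Fin n → ℝ := fun i => sgn σ i * ((σ.1 i : ℕ) + 1)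

/-- The linear action of a signed permutation on `ℝ^n`, extending
`ω e_i = e_j` if `ω(i) = j` and `ω e_i = -e_j` if `ω(i) = -j`. -/
def sact {n : ℕ} (σ : SignedPerm n) (x : Fin n → ℝ) : Fin n → ℝ :=
  fun j => sgn σ (σ.1.symm j) * x (σ.1.symm j)

/-- The linear action of the inverse signed permutation `σ⁻¹` on `ℝ^n`. -/
def sactInv {n : ℕ} (σ : SignedPerm n) (x : Fin n → ℝ) : Fin n → ℝ :=
  fun i => sgn σ i * x (σ.1 i)

/-- The identity signed permutation. -/
def idSP (n : ℕ) : SignedPerm n := (Equiv.refl (Fin n), fun _ => false)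

/-- The Jordan–Hölder set of a signed poset. -/
def JH {n : ℕ} (P : Set (Fin n → ℝ)) : Set (SignedPerm n) :=
  {σ | ∀ α ∈ P, 0 ≤ dot α (spt σ)}

/-- The value `σ(k)` (as a real number), with the convention `σ(0) = 0`;
here `k` ranges over `0, 1, ..., n`. -/
def svalZ {n : ℕ} (σ : SignedPerm n) : ℕ → ℝ
  | 0 => 0
  | k + 1 => if h : k < n then spt σ ⟨k, h⟩ else 0

/-- The natural descent statistic `natdes(σ) = #{i ∈ {0,...,n-1} : σ(i) > σ(i+1)}`. -/
def natdes {n : ℕ} (σ : SignedPerm n) : ℕ :=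
  ((Finset.range n).filter (fun i => svalZ σ (i + 1) < svalZ σ i)).card

/-- The value `ε_k p_{π_k}` at the point `p = (1/(n+1), ..., n/(n+1))`, with the
convention that the value at `k = 0` is `0`; `k` ranges over `0, 1, ..., n`. -/
def pvalZ {n : ℕ} (σ : SignedPerm n) : ℕ → ℝ
  | 0 => 0
  | k + 1 => if h : k < n then sgn σ ⟨k, h⟩ * (((σ.1 ⟨k, h⟩ : ℕ) + 1 : ℝ) / (n + 1)) else 0

/-- `p` is beyond the facet `{ε_k x_{π_k} = ε_{k+1} x_{π_{k+1}}}` iff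
`σ(k) > σ(k+1)`; `p` is beyond `{ε_1 x_{π_1} = 0}` iff `σ(1) < 0`; `p` is never beyond
`{ε_n x_{π_n} = 1}`; hence `H_p Δ_σ` has exactly `natdes(σ)` removed facets. -/
theorem stmt11 {n : ℕ} (σ : SignedPerm n) :
    (∀ k : ℕ, 1 ≤ k → k < n → (pvalZ σ k > pvalZ σ (k + 1) ↔ svalZ σ k > svalZ σ (k + 1))) ∧
    (pvalZ σ 1 < 0 ↔ svalZ σ 1 < 0) ∧
    ¬ (1 < pvalZ σ n) ∧
    ((Finset.range n).filter (fun k => pvalZ σ (k + 1) < pvalZ σ k)).card = natdes σ := by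
  have hpos : (0 : ℝ) < (n : ℝ) + 1 := by positivity
  have key : ∀ k, pvalZ σ k = svalZ σ k / (n + 1) := by
    intro k
    cases k with
    | zero => simp [pvalZ, svalZ]
    | succ m =>
      by_cases h : m < n
      · simp [pvalZ, svalZ, h, spt, mul_div_assoc]
      · simp [pvalZ, svalZ, h]
  have hiff : ∀ a b : ℕ, (pvalZ σ a < pvalZ σ b ↔ svalZ σ a < svalZ σ b) := by
    intro a b
    rw [key, key, div_lt_div_iff_of_pos_right hpos]
  refine ⟨fun k _ _ => hiff _ _, ?_, ?_, ?_⟩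
  · have := hiff 1 0
    simpa [svalZ, pvalZ] using this
  · rw [key]
    intro h
    have hb : svalZ σ n ≤ n + 1 := by
      cases n with
      | zero => simp [svalZ]
      | succ m =>
        simp only [svalZ, Nat.lt_succ_self, dif_pos]
        have : |spt σ ⟨m, Nat.lt_succ_self m⟩| ≤ (m : ℝ) + 1 := by
          simp only [spt, sgn, abs_mul]
          have h1 : ((σ.1 ⟨m, Nat.lt_succ_self m⟩ : ℕ) : ℝ) ≤ m := by
            exact_mod_cast Nat.lt_succ_iff.mp (σ.1 ⟨m, Nat.lt_succ_self m⟩).2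
          have h2 : |(((σ.1 ⟨m, Nat.lt_succ_self m⟩ : ℕ) : ℝ) + 1)| ≤ (m : ℝ) + 1 := by
            rw [abs_of_nonneg (by positivity)]; linarith
          rcases σ.2 ⟨m, Nat.lt_succ_self m⟩ <;> simpa using h2
        push_cast
        linarith [le_abs_self (spt σ ⟨m, Nat.lt_succ_self m⟩), this]
    exact absurd ((div_le_one hpos).mpr hb) (not_le.mpr h)
  · unfold natdes
    congr 1
    apply Finset.filter_congr
    intro k _
    simp only [hiff, eq_iff_iff]
end
end

section
/- A finite poset Q on the ground set [-n, n] = {-n, ..., -1, 0, 1, ..., n} is the Fischer representation Ĝ(P) of some signed poset P on [n] if and only if: (1) i <_Q j if and only if -j <_Q -i for all i, j ∈ [-n,n]; and (2) if -i <_Q i then -i <_Q 0 <_Q i, for all i ∈ [-n,n]. -/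
open Finset Pointwise

noncomputable section
attribute [local instance] Classical.propDecidable

/-- The element `i ∈ [n]` viewed as the integer `i + 1 ∈ {1, ..., n}`. -/
def iota {n : ℕ} (i : Fin n) : ℤ := (i : ℕ) + 1

/-- The generating relations of the Fischer representation `Ĝ(P)` on `[-n, n]`. -/
def fischerGen {n : ℕ} (P : Set (Fin n → ℝ)) : ℤ → ℤ → Prop := fun a b =>
  (∃ i j : Fin n, ee n j - ee n i ∈ P ∧
     ((a = iota i ∧ b = iota j) ∨ (a = -iota j ∧ b = -iota i))) ∨
  (∃ i j : Fin n, -ee n i - ee n j ∈ P ∧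
     ((a = iota i ∧ b = -iota j) ∨ (a = iota j ∧ b = -iota i))) ∨
  (∃ i j : Fin n, ee n i + ee n j ∈ P ∧
     ((a = -iota i ∧ b = iota j) ∨ (a = -iota j ∧ b = iota i))) ∨
  (∃ i : Fin n, -ee n i ∈ P ∧ ((a = iota i ∧ b = 0) ∨ (a = 0 ∧ b = -iota i))) ∨
  (∃ i : Fin n, ee n i ∈ P ∧ ((a = -iota i ∧ b = 0) ∨ (a = 0 ∧ b = iota i)))

/-- The strict order relation of the Fischer representation `Ĝ(P)`:
the transitive closure of the generating relations. -/
def flt {n : ℕ} (P : Set (Fin n → ℝ)) : ℤ → ℤ → Prop :=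
  Relation.TransGen (fischerGen P)

/-- `c 0 < c 1 < ... < c m` is a maximal chain of the poset on `[-n, n]` with strict
order `lt`: it is a chain, saturated, and cannot be extended below or above. -/
def IsMaxChainOn (n : ℕ) (lt : ℤ → ℤ → Prop) (c : ℕ → ℤ) (m : ℕ) : Prop :=
  (∀ k ≤ m, (c k).natAbs ≤ n) ∧ (∀ k < m, lt (c k) (c (k + 1))) ∧
  (∀ a : ℤ, a.natAbs ≤ n → ¬ lt a (c 0)) ∧
  (∀ a : ℤ, a.natAbs ≤ n → ¬ lt (c m) a) ∧
  (∀ k < m, ∀ a : ℤ, a.natAbs ≤ n → ¬ (lt (c k) a ∧ lt a (c (k + 1))))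

/-- The Fischer representation `Ĝ(P)` is graded: all maximal chains have the same length. -/
def FischerGraded (n : ℕ) (P : Set (Fin n → ℝ)) : Prop :=
  ∀ c m c' m', IsMaxChainOn n (flt P) c m → IsMaxChainOn n (flt P) c' m' → m = m'

/-- `b` covers `a` in the poset on `[-n, n]` with strict order `lt`. -/
def fCovBy (n : ℕ) (lt : ℤ → ℤ → Prop) (a b : ℤ) : Prop :=
  lt a b ∧ ∀ x : ℤ, x.natAbs ≤ n → ¬ (lt a x ∧ lt x b)

namespace Stmt14Aux

def Iv (c z : ℤ) : ℤ := if z = c then 1 else if z = -c then -1 else 0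

lemma Iv_neg_right {c z : ℤ} (hz : z ≠ 0) : Iv c (-z) = -Iv c z := by
  simp only [Iv]; split_ifs <;> omega

lemma Iv_neg_left {c z : ℤ} (hz : z ≠ 0) : Iv (-c) z = -Iv c z := by
  simp only [Iv, neg_neg]; split_ifs <;> omega

lemma Iv_zero_left {z : ℤ} (hz : z ≠ 0) : Iv 0 z = 0 := by
  simp only [Iv, neg_zero]; split_ifs <;> omega

lemma Iv_ext {c d : ℤ} (h : ∀ z : ℤ, z ≠ 0 → Iv c z = Iv d z) : c = d := by
  by_cases hc : c = 0
  · subst hc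
    by_cases hd : d = 0
    · omega
    · have := h d hd; simp only [Iv] at this; split_ifs at this <;> omega
  · have := h c hc; simp only [Iv] at this; split_ifs at this <;> omega

lemma Iv_key {a b a' b' : ℤ} (hab : a ≠ b) (hab' : a' ≠ b')
    (H : ∀ z : ℤ, z ≠ 0 → Iv b z - Iv a z = Iv b' z - Iv a' z) :
    (a = a' ∧ b = b') ∨ (a = -b' ∧ b = -a') := by
  by_cases hb : b = 0
  · subst hb
    have ha : a ≠ 0 := fun h => hab (by omega)
    have hcase : a' = a ∨ b' = -a := by
      have := H a ha; simp only [Iv] at this; split_ifs at this <;> omega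
    rcases hcase with h1 | h1
    · subst h1
      have hb' : b' = 0 := by
        refine Iv_ext (fun z hz => ?_)
        have h2 := H z hz
        have h3 := Iv_zero_left hz
        omega
      left; omega
    · subst h1
      have ha' : a' = 0 := by
        refine Iv_ext (fun z hz => ?_)
        have h2 := H z hz
        have h3 := Iv_zero_left hz
        have h4 := Iv_neg_left (c := a) hz
        omega
      right; omega
  · have hcase : b' = b ∨ a' = -b := by
      have := H b hb; simp only [Iv] at this; split_ifs at this <;> omega
    rcases hcase with h1 | h1
    · subst h1
      have : a = a' := by
        refine Iv_ext (fun z hz => ?_)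
        have h2 := H z hz; omega
      left; omega
    · subst h1
      have : b' = -a := by
        refine Iv_ext (fun z hz => ?_)
        have h2 := H z hz
        have h3 := Iv_neg_left (c := b) hz
        have h4 := Iv_neg_left (c := a) hz
        omega
      right; omega

def fvec (n : ℕ) (a : ℤ) : Fin n → ℝ := fun j => ((Iv a (((j : ℕ) : ℤ) + 1) : ℤ) : ℝ)

lemma fvec_diff_Iv {n : ℕ} {a b a' b' : ℤ} (ha : a.natAbs ≤ n) (hb : b.natAbs ≤ n)
    (ha' : a'.natAbs ≤ n) (hb' : b'.natAbs ≤ n)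
    (h : fvec n b - fvec n a = fvec n b' - fvec n a') :
    ∀ z : ℤ, z ≠ 0 → Iv b z - Iv a z = Iv b' z - Iv a' z := by
  have aux : ∀ z : ℤ, 1 ≤ z → Iv b z - Iv a z = Iv b' z - Iv a' z := by
    intro z hz
    by_cases hzn : z ≤ (n : ℤ)
    · have hj : ((z - 1).toNat) < n := by omega
      have h2 := congrFun h (⟨(z - 1).toNat, hj⟩ : Fin n)
      simp only [fvec, Pi.sub_apply] at h2
      have hz1 : (((z - 1).toNat : ℕ) : ℤ) + 1 = z := by omega
      rw [hz1] at h2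
      exact_mod_cast h2
    · have hv : ∀ c : ℤ, c.natAbs ≤ n → Iv c z = 0 := by
        intro c hc; simp only [Iv]; split_ifs <;> omega
      rw [hv a ha, hv b hb, hv a' ha', hv b' hb']
  intro z hz
  rcases lt_or_gt_of_ne hz with h1 | h1
  · have h2 := aux (-z) (by omega)
    have e1 := Iv_neg_right (c := a) hz
    have e2 := Iv_neg_right (c := b) hz
    have e3 := Iv_neg_right (c := a') hz
    have e4 := Iv_neg_right (c := b') hz
    omega
  · exact aux z h1

lemma fvec_inj {n : ℕ} {a b : ℤ} (ha : a.natAbs ≤ n) (hb : b.natAbs ≤ n)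
    (h : fvec n a = fvec n b) : a = b := by
  have h0 : fvec n a - fvec n 0 = fvec n b - fvec n 0 := by rw [h]
  have H := fvec_diff_Iv (a := 0) (b := a) (a' := 0) (b' := b)
    (by simp) ha (by simp) hb h0
  refine Iv_ext (fun z hz => ?_)
  have := H z hz; omega

lemma fvec_diff_inj {n : ℕ} {a b a' b' : ℤ} (ha : a.natAbs ≤ n) (hb : b.natAbs ≤ n)
    (ha' : a'.natAbs ≤ n) (hb' : b'.natAbs ≤ n) (hab : a ≠ b) (hab' : a' ≠ b')
    (h : fvec n b - fvec n a = fvec n b' - fvec n a') :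
    (a = a' ∧ b = b') ∨ (a = -b' ∧ b = -a') :=
  Iv_key hab hab' (fvec_diff_Iv ha hb ha' hb' h)

lemma iota_natAbs {n : ℕ} (i : Fin n) : (iota i).natAbs ≤ n := by
  have := i.isLt; simp [iota]; omega

lemma neg_iota_natAbs {n : ℕ} (i : Fin n) : (-iota i).natAbs ≤ n := by
  have := i.isLt; simp [iota]; omega

lemma iota_pos {n : ℕ} (i : Fin n) : 1 ≤ iota i := by simp only [iota]; omega

lemma exists_iota {n : ℕ} {a : ℤ} (h1 : 1 ≤ a) (h2 : a.natAbs ≤ n) :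
    ∃ i : Fin n, a = iota i := by
  refine ⟨⟨a.toNat - 1, by omega⟩, ?_⟩
  simp only [iota]; omega

lemma fvec_iota {n : ℕ} (i : Fin n) : fvec n (iota i) = ee n i := by
  funext j
  simp only [fvec, ee, Iv, iota]
  by_cases h : j = i
  · subst h; simp
  · have hne : ((j : ℕ) : ℤ) ≠ ((i : ℕ) : ℤ) := by
      simp [Fin.val_ne_of_ne h]
    have h1 : ¬ (((j : ℕ) : ℤ) + 1 = ((i : ℕ) : ℤ) + 1) := by omega
    have h2 : ¬ (((j : ℕ) : ℤ) + 1 = -(((i : ℕ) : ℤ) + 1)) := by omega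
    simp only [h1, h2, h, if_false]
    simp

lemma fvec_zero {n : ℕ} : fvec n 0 = 0 := by
  funext j
  simp only [fvec, Pi.zero_apply]
  rw [Iv_zero_left (by omega)]
  simp

lemma fvec_neg {n : ℕ} (a : ℤ) : fvec n (-a) = -(fvec n a) := by
  funext j
  simp only [fvec, Pi.neg_apply]
  rw [Iv_neg_left (by omega)]
  push_cast; ring

lemma fvec_neg_iota {n : ℕ} (i : Fin n) : fvec n (-iota i) = -ee n i := by
  rw [fvec_neg, fvec_iota]

lemma ee_mem_Bn {n : ℕ} (i : Fin n) : ee n i ∈ Bn n := Or.inl ⟨i, Or.inl rfl⟩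

lemma neg_ee_mem_Bn {n : ℕ} (i : Fin n) : -ee n i ∈ Bn n := Or.inl ⟨i, Or.inr rfl⟩

lemma sub_ee_mem_Bn {n : ℕ} {i j : Fin n} (h : i ≠ j) : ee n j - ee n i ∈ Bn n := by
  rcases lt_or_gt_of_ne h with h1 | h1
  · exact Or.inr ⟨i, j, h1, Or.inr (Or.inr (Or.inr (by abel)))⟩
  · exact Or.inr ⟨j, i, h1, Or.inr (Or.inr (Or.inl rfl))⟩

lemma neg_add_ee_mem_Bn {n : ℕ} {i j : Fin n} (h : i ≠ j) : -ee n i - ee n j ∈ Bn n := by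
  rcases lt_or_gt_of_ne h with h1 | h1
  · exact Or.inr ⟨i, j, h1, Or.inr (Or.inl rfl)⟩
  · exact Or.inr ⟨j, i, h1, Or.inr (Or.inl (by abel))⟩

lemma add_ee_mem_Bn {n : ℕ} {i j : Fin n} (h : i ≠ j) : ee n i + ee n j ∈ Bn n := by
  rcases lt_or_gt_of_ne h with h1 | h1
  · exact Or.inr ⟨i, j, h1, Or.inl rfl⟩
  · exact Or.inr ⟨j, i, h1, Or.inl (by abel)⟩

lemma Bn_repr {n : ℕ} {β : Fin n → ℝ} (hβ : β ∈ Bn n) :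
    ∃ a b : ℤ, a.natAbs ≤ n ∧ b.natAbs ≤ n ∧ a ≠ b ∧ β = fvec n b - fvec n a := by
  rcases hβ with ⟨i, h | h⟩ | ⟨i, j, hij, h | h | h | h⟩
  · exact ⟨0, iota i, by simp, iota_natAbs i, by have := iota_pos i; omega,
      by rw [h, fvec_iota, fvec_zero, sub_zero]⟩
  · exact ⟨iota i, 0, iota_natAbs i, by simp, by have := iota_pos i; omega,
      by rw [h, fvec_iota, fvec_zero, zero_sub]⟩
  · refine ⟨-iota i, iota j, neg_iota_natAbs i, iota_natAbs j,
      by have := iota_pos i; have := iota_pos j; omega, ?_⟩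
    rw [h, fvec_iota, fvec_neg_iota]; abel
  · refine ⟨iota i, -iota j, iota_natAbs i, neg_iota_natAbs j,
      by have := iota_pos i; have := iota_pos j; omega, ?_⟩
    rw [h, fvec_iota, fvec_neg_iota]; abel
  · refine ⟨iota j, iota i, iota_natAbs j, iota_natAbs i, ?_, ?_⟩
    · have h2 : (i : ℕ) < (j : ℕ) := hij
      simp only [iota]; omega
    · rw [h, fvec_iota, fvec_iota]
  · refine ⟨iota i, iota j, iota_natAbs i, iota_natAbs j, ?_, ?_⟩
    · have h2 : (i : ℕ) < (j : ℕ) := hij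
      simp only [iota]; omega
    · rw [h, fvec_iota, fvec_iota]; abel

lemma Bn_ne_zero {n : ℕ} {β : Fin n → ℝ} (hβ : β ∈ Bn n) : β ≠ 0 := by
  obtain ⟨a, b, ha, hb, hab, he⟩ := Bn_repr hβ
  intro h0
  rw [h0] at he
  exact hab (fvec_inj hb ha (sub_eq_zero.mp he.symm)).symm

lemma dot_sub {n : ℕ} (α β x : Fin n → ℝ) : dot (α - β) x = dot α x - dot β x := by
  simp [dot, sub_mul, Finset.sum_sub_distrib]

lemma dot_neg {n : ℕ} (α x : Fin n → ℝ) : dot (-α) x = -dot α x := by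
  simp [dot]

lemma dot_ee {n : ℕ} (i : Fin n) (x : Fin n → ℝ) : dot (ee n i) x = x i := by
  simp [dot, ee, ite_mul]

lemma dot_sum {n m : ℕ} (c : Fin m → ℝ) (v : Fin m → Fin n → ℝ) (x : Fin n → ℝ) :
    dot (∑ k, c k • v k) x = ∑ k, c k * dot (v k) x := by
  simp only [dot, Finset.sum_apply, Pi.smul_apply, smul_eq_mul, Finset.sum_mul,
    Finset.mul_sum]
  rw [Finset.sum_comm]
  apply Finset.sum_congr rfl
  intro k _
  apply Finset.sum_congr rfl
  intro i _
  ring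

lemma dot_fvec {n : ℕ} (g : ℤ → ℝ) (godd : ∀ z, g (-z) = -g z) {b : ℤ}
    (hb : b.natAbs ≤ n) :
    dot (fvec n b) (fun i => g (iota i)) = g b := by
  have g0 : g 0 = 0 := by have := godd 0; simp at this; linarith
  rcases lt_trichotomy b 0 with h | h | h
  · obtain ⟨i, hi⟩ := exists_iota (n := n) (a := -b) (by omega) (by omega)
    rw [show b = -iota i by omega, fvec_neg_iota, dot_neg, dot_ee]
    rw [show (-iota i : ℤ) = -(iota i) from rfl, godd (iota i)]
  · rw [h, fvec_zero, g0]; simp [dot]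
  · obtain ⟨i, hi⟩ := exists_iota (n := n) (a := b) (by omega) hb
    rw [hi, fvec_iota, dot_ee]

lemma PLC_mem {n : ℕ} {P : Set (Fin n → ℝ)} {α : Fin n → ℝ} (h : α ∈ P) : α ∈ PLC P :=
  ⟨1, fun _ => 1, fun _ => α, fun _ => one_pos, fun _ => h, by simp⟩

lemma PLC_add {n : ℕ} {P : Set (Fin n → ℝ)} {β γ : Fin n → ℝ}
    (h1 : β ∈ PLC P) (h2 : γ ∈ PLC P) : β + γ ∈ PLC P := by
  obtain ⟨m1, c1, v1, hc1, hv1, he1⟩ := h1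
  obtain ⟨m2, c2, v2, hc2, hv2, he2⟩ := h2
  refine ⟨m1 + m2, Fin.addCases c1 c2, Fin.addCases v1 v2, ?_, ?_, ?_⟩
  · intro k
    induction k using Fin.addCases with
    | left i => simpa using hc1 i
    | right i => simpa using hc2 i
  · intro k
    induction k using Fin.addCases with
    | left i => simpa using hv1 i
    | right i => simpa using hv2 i
  · rw [he1, he2, Fin.sum_univ_add]
    simp

lemma PLC_smul {n : ℕ} {P : Set (Fin n → ℝ)} {β : Fin n → ℝ} {t : ℝ}
    (ht : 0 < t) (h : β ∈ PLC P) : t • β ∈ PLC P := by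
  obtain ⟨m, c, v, hc, hv, he⟩ := h
  refine ⟨m, fun k => t * c k, v, fun k => mul_pos ht (hc k), hv, ?_⟩
  rw [he, Finset.smul_sum]
  simp [smul_smul]

def chi (p : Prop) : ℝ := if p then 1 else 0

lemma chi_nonneg (p : Prop) : 0 ≤ chi p := by
  unfold chi; split_ifs <;> norm_num

lemma chi_mono {p q : Prop} (h : p → q) : chi p ≤ chi q := by
  unfold chi; split_ifs with h1 h2 <;> try norm_num
  exact absurd (h h1) h2

lemma chi_true {p : Prop} (h : p) : chi p = 1 := by simp [chi, h]

lemma chi_false {p : Prop} (h : ¬ p) : chi p = 0 := by simp [chi, h]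

/-- The signed poset associated to the relation `r`. -/
def P0 (n : ℕ) (r : ℤ → ℤ → Prop) : Set (Fin n → ℝ) :=
  {α | α ∈ Bn n ∧
    ∀ a b : ℤ, a.natAbs ≤ n → b.natAbs ≤ n → α = fvec n b - fvec n a → r a b}

lemma mem_P0_of {n : ℕ} {r : ℤ → ℤ → Prop}
    (hsym : ∀ a b : ℤ, a.natAbs ≤ n → b.natAbs ≤ n → (r a b ↔ r (-b) (-a)))
    {a b : ℤ} (ha : a.natAbs ≤ n) (hb : b.natAbs ≤ n) (hab : a ≠ b)
    (hBn : fvec n b - fvec n a ∈ Bn n) (hr : r a b) :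
    fvec n b - fvec n a ∈ P0 n r := by
  refine ⟨hBn, fun a' b' ha' hb' heq => ?_⟩
  have hab' : a' ≠ b' := by
    rintro rfl
    rw [sub_self] at heq
    exact Bn_ne_zero hBn heq
  rcases fvec_diff_inj ha hb ha' hb' hab hab' heq with ⟨h1, h2⟩ | ⟨h1, h2⟩
  · rw [← h1, ← h2]; exact hr
  · have h3 : a' = -b := by omega
    have h4 : b' = -a := by omega
    rw [h3, h4]
    exact (hsym a b ha hb).mp hr

/-- Separation: if `¬ r a b` then there is an odd weakly monotone function `g`
with `g b < g a`. -/
lemma sep {n : ℕ} {r : ℤ → ℤ → Prop}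
    (hsupp : ∀ a b, r a b → a.natAbs ≤ n ∧ b.natAbs ≤ n)
    (htrans : ∀ a b c, r a b → r b c → r a c)
    (hsym : ∀ a b : ℤ, a.natAbs ≤ n → b.natAbs ≤ n → (r a b ↔ r (-b) (-a)))
    (hmid : ∀ a : ℤ, a.natAbs ≤ n → r (-a) a → r (-a) 0 ∧ r 0 a)
    {a b : ℤ} (ha : a.natAbs ≤ n) (hb : b.natAbs ≤ n) (hab : a ≠ b) (hnr : ¬ r a b) :
    ∃ g : ℤ → ℝ, (∀ z, g (-z) = -g z) ∧ (∀ u v, r u v → g u ≤ g v) ∧ g b < g a := by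
  by_cases hB : b = 0 ∨ r (-b) b
  · have hA : ¬ (a = 0 ∨ r a (-a)) := by
      rintro (rfl | hra)
      · rcases hB with rfl | hrb
        · exact hab rfl
        · exact hnr (hmid b hb hrb).2
      · have h1 := hmid (-a) (by simpa using ha) (by rwa [neg_neg])
        have h2 : r a 0 := by simpa using h1.1
        rcases hB with rfl | hrb
        · exact hnr h2
        · exact hnr (htrans _ _ _ h2 (hmid b hb hrb).2)
    refine ⟨fun z => chi (z = a ∨ r a z) - chi (-z = a ∨ r a (-z)), ?_, ?_, ?_⟩
    · intro z; simp only [neg_neg]; ring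
    · intro u v huv
      have hbounds := hsupp u v huv
      have hmir : r (-v) (-u) := (hsym u v hbounds.1 hbounds.2).mp huv
      have m1 : chi (u = a ∨ r a u) ≤ chi (v = a ∨ r a v) := by
        apply chi_mono
        rintro (rfl | h)
        · exact Or.inr huv
        · exact Or.inr (htrans _ _ _ h huv)
      have m2 : chi (-v = a ∨ r a (-v)) ≤ chi (-u = a ∨ r a (-u)) := by
        apply chi_mono
        rintro (h | h)
        · exact Or.inr (h ▸ hmir)
        · exact Or.inr (htrans _ _ _ h hmir)
      show chi (u = a ∨ r a u) - chi (-u = a ∨ r a (-u)) ≤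
        chi (v = a ∨ r a v) - chi (-v = a ∨ r a (-v))
      linarith
    · have e1 : chi (a = a ∨ r a a) = 1 := chi_true (Or.inl rfl)
      have e2 : chi (-a = a ∨ r a (-a)) = 0 := by
        apply chi_false
        rintro (h | h)
        · exact hA (Or.inl (by omega))
        · exact hA (Or.inr h)
      have e3 : chi (b = a ∨ r a b) = 0 := by
        apply chi_false
        rintro (h | h)
        · exact hab h.symm
        · exact hnr h
      have e4 := chi_nonneg (-b = a ∨ r a (-b))
      show chi (b = a ∨ r a b) - chi (-b = a ∨ r a (-b)) <
        chi (a = a ∨ r a a) - chi (-a = a ∨ r a (-a))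
      linarith
  · push_neg at hB
    obtain ⟨hb0, hnrb⟩ := hB
    refine ⟨fun z => chi (-z = b ∨ r (-z) b) - chi (z = b ∨ r z b), ?_, ?_, ?_⟩
    · intro z; simp only [neg_neg]; ring
    · intro u v huv
      have hbounds := hsupp u v huv
      have hmir : r (-v) (-u) := (hsym u v hbounds.1 hbounds.2).mp huv
      have m1 : chi (-u = b ∨ r (-u) b) ≤ chi (-v = b ∨ r (-v) b) := by
        apply chi_mono
        rintro (h | h)
        · exact Or.inr (h ▸ hmir)
        · exact Or.inr (htrans _ _ _ hmir h)
      have m2 : chi (v = b ∨ r v b) ≤ chi (u = b ∨ r u b) := by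
        apply chi_mono
        rintro (rfl | h)
        · exact Or.inr huv
        · exact Or.inr (htrans _ _ _ huv h)
      show chi (-u = b ∨ r (-u) b) - chi (u = b ∨ r u b) ≤
        chi (-v = b ∨ r (-v) b) - chi (v = b ∨ r v b)
      linarith
    · have e1 : chi (b = b ∨ r b b) = 1 := chi_true (Or.inl rfl)
      have e2 : chi (-b = b ∨ r (-b) b) = 0 := by
        apply chi_false
        rintro (h | h)
        · exact hb0 (by omega)
        · exact hnrb h
      have e3 : chi (a = b ∨ r a b) = 0 := by
        apply chi_false
        rintro (h | h)
        · exact hab h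
        · exact hnr h
      have e4 := chi_nonneg (-a = b ∨ r (-a) b)
      have e5 := chi_nonneg (a = b ∨ r a b)
      show chi (-b = b ∨ r (-b) b) - chi (b = b ∨ r b b) <
        chi (-a = b ∨ r (-a) b) - chi (a = b ∨ r a b)
      linarith

lemma P0_antisym {n : ℕ} {r : ℤ → ℤ → Prop}
    (hirr : ∀ a, ¬ r a a) (htrans : ∀ a b c, r a b → r b c → r a c) :
    ∀ α ∈ P0 n r, -α ∉ P0 n r := by
  rintro α ⟨hBn, hα⟩ ⟨hBn', hα'⟩
  obtain ⟨a, b, ha, hb, hab, he⟩ := Bn_repr hBn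
  have h1 : r a b := hα a b ha hb he
  have h2 : r b a := by
    refine hα' b a hb ha ?_
    rw [he]; abel
  exact hirr a (htrans _ _ _ h1 h2)

lemma P0_plc_closed {n : ℕ} {r : ℤ → ℤ → Prop}
    (hsupp : ∀ a b, r a b → a.natAbs ≤ n ∧ b.natAbs ≤ n)
    (htrans : ∀ a b c, r a b → r b c → r a c)
    (hsym : ∀ a b : ℤ, a.natAbs ≤ n → b.natAbs ≤ n → (r a b ↔ r (-b) (-a)))
    (hmid : ∀ a : ℤ, a.natAbs ≤ n → r (-a) a → r (-a) 0 ∧ r 0 a) :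
    ∀ β ∈ Bn n, β ∈ PLC (P0 n r) → β ∈ P0 n r := by
  intro β hBn hplc
  refine ⟨hBn, fun a b ha hb heq => ?_⟩
  have hab : a ≠ b := by
    rintro rfl
    rw [sub_self] at heq
    exact Bn_ne_zero hBn heq
  by_contra hnr
  obtain ⟨g, godd, gmono, glt⟩ := sep hsupp htrans hsym hmid ha hb hab hnr
  set x : Fin n → ℝ := fun i => g (iota i) with hx
  obtain ⟨m, c, v, hc, hv, hβ⟩ := hplc
  have hterm : ∀ k, 0 ≤ dot (v k) x := by
    intro k
    obtain ⟨hBk, hPk⟩ := hv k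
    obtain ⟨ak, bk, hak, hbk, hnek, heqk⟩ := Bn_repr hBk
    have hr := hPk ak bk hak hbk heqk
    rw [heqk, dot_sub, dot_fvec g godd hbk, dot_fvec g godd hak]
    have := gmono ak bk hr
    linarith
  have h1 : 0 ≤ dot β x := by
    rw [hβ, dot_sum]
    exact Finset.sum_nonneg fun k _ => mul_nonneg (hc k).le (hterm k)
  have h2 : dot β x = g b - g a := by
    rw [heq, dot_sub, dot_fvec g godd hb, dot_fvec g godd ha]
  linarith

lemma r_to_gen {n : ℕ} {r : ℤ → ℤ → Prop}
    (hsupp : ∀ a b, r a b → a.natAbs ≤ n ∧ b.natAbs ≤ n)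
    (hirr : ∀ a, ¬ r a a)
    (hsym : ∀ a b : ℤ, a.natAbs ≤ n → b.natAbs ≤ n → (r a b ↔ r (-b) (-a)))
    {a b : ℤ} (hr : r a b) (hnb : b ≠ -a) : fischerGen (P0 n r) a b := by
  obtain ⟨ha, hb⟩ := hsupp a b hr
  have hab : a ≠ b := by rintro rfl; exact hirr a hr
  have hmem : ∀ (α : Fin n → ℝ), α = fvec n b - fvec n a → α ∈ Bn n → α ∈ P0 n r := by
    intro α hα hBn
    rw [hα]
    exact mem_P0_of hsym ha hb hab (hα ▸ hBn) hr
  rcases lt_trichotomy a 0 with hA | hA | hA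
  · obtain ⟨i, hi⟩ := exists_iota (n := n) (a := -a) (by omega) (by omega)
    rcases lt_trichotomy b 0 with hBc | hBc | hBc
    · -- a < 0, b < 0 : gen 1, second disjunct
      obtain ⟨j, hj⟩ := exists_iota (n := n) (a := -b) (by omega) (by omega)
      have hij : j ≠ i := by
        intro h; rw [h] at hj; omega
      refine Or.inl ⟨j, i, ?_, Or.inr ⟨by omega, by omega⟩⟩
      refine hmem _ ?_ (sub_ee_mem_Bn hij)
      rw [show b = -iota j by omega, show a = -iota i by omega,
        fvec_neg_iota, fvec_neg_iota]
      abel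
    · -- a < 0, b = 0 : gen 5, first disjunct
      refine Or.inr (Or.inr (Or.inr (Or.inr ⟨i, ?_, Or.inl ⟨by omega, by omega⟩⟩)))
      refine hmem _ ?_ (ee_mem_Bn i)
      rw [show b = (0:ℤ) by omega, show a = -iota i by omega, fvec_zero, fvec_neg_iota]
      abel
    · -- a < 0, b > 0 : gen 3, first disjunct
      obtain ⟨j, hj⟩ := exists_iota (n := n) (a := b) (by omega) hb
      have hij : i ≠ j := by
        intro h; rw [h] at hi; omega
      refine Or.inr (Or.inr (Or.inl ⟨i, j, ?_, Or.inl ⟨by omega, by omega⟩⟩))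
      refine hmem _ ?_ (add_ee_mem_Bn hij)
      rw [show a = -iota i by omega, hj, fvec_iota, fvec_neg_iota]
      abel
  · -- a = 0
    subst hA
    rcases lt_trichotomy b 0 with hBc | hBc | hBc
    · -- a = 0, b < 0 : gen 4, second disjunct
      obtain ⟨i, hi⟩ := exists_iota (n := n) (a := -b) (by omega) (by omega)
      refine Or.inr (Or.inr (Or.inr (Or.inl ⟨i, ?_, Or.inr ⟨rfl, by omega⟩⟩)))
      refine hmem _ ?_ (neg_ee_mem_Bn i)
      rw [show b = -iota i by omega, fvec_zero, fvec_neg_iota]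
      abel
    · omega
    · -- a = 0, b > 0 : gen 5, second disjunct
      obtain ⟨i, hi⟩ := exists_iota (n := n) (a := b) (by omega) hb
      refine Or.inr (Or.inr (Or.inr (Or.inr ⟨i, ?_, Or.inr ⟨rfl, by omega⟩⟩)))
      refine hmem _ ?_ (ee_mem_Bn i)
      rw [hi, fvec_iota, fvec_zero]
      abel
  · obtain ⟨i, hi⟩ := exists_iota (n := n) (a := a) (by omega) ha
    rcases lt_trichotomy b 0 with hBc | hBc | hBc
    · -- a > 0, b < 0 : gen 2, first disjunct
      obtain ⟨j, hj⟩ := exists_iota (n := n) (a := -b) (by omega) (by omega)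
      have hij : i ≠ j := by
        intro h; rw [h] at hi; omega
      refine Or.inr (Or.inl ⟨i, j, ?_, Or.inl ⟨by omega, by omega⟩⟩)
      refine hmem _ ?_ (neg_add_ee_mem_Bn hij)
      rw [show b = -iota j by omega, hi, fvec_iota, fvec_neg_iota]
      abel
    · -- a > 0, b = 0 : gen 4, first disjunct
      refine Or.inr (Or.inr (Or.inr (Or.inl ⟨i, ?_, Or.inl ⟨by omega, by omega⟩⟩)))
      refine hmem _ ?_ (neg_ee_mem_Bn i)
      rw [show b = (0:ℤ) by omega, hi, fvec_zero, fvec_iota]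
      abel
    · -- a > 0, b > 0 : gen 1, first disjunct
      obtain ⟨j, hj⟩ := exists_iota (n := n) (a := b) (by omega) hb
      have hij : i ≠ j := by
        intro h; rw [h] at hi; omega
      refine Or.inl ⟨i, j, ?_, Or.inl ⟨by omega, by omega⟩⟩
      refine hmem _ ?_ (sub_ee_mem_Bn hij)
      rw [hi, hj, fvec_iota, fvec_iota]

lemma r_to_flt {n : ℕ} {r : ℤ → ℤ → Prop}
    (hsupp : ∀ a b, r a b → a.natAbs ≤ n ∧ b.natAbs ≤ n)
    (hirr : ∀ a, ¬ r a a)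
    (hsym : ∀ a b : ℤ, a.natAbs ≤ n → b.natAbs ≤ n → (r a b ↔ r (-b) (-a)))
    (hmid : ∀ a : ℤ, a.natAbs ≤ n → r (-a) a → r (-a) 0 ∧ r 0 a)
    {a b : ℤ} (hr : r a b) : flt (P0 n r) a b := by
  by_cases hnb : b = -a
  · subst hnb
    have ha0 : a ≠ 0 := by rintro rfl; exact hirr 0 (by simpa using hr)
    have h1 := hmid (-a) (by simpa using (hsupp _ _ hr).1) (by rwa [neg_neg])
    have h2 : r a 0 := by simpa using h1.1
    have h3 : r 0 (-a) := h1.2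
    exact Relation.TransGen.trans
      (Relation.TransGen.single (r_to_gen hsupp hirr hsym h2 (by omega)))
      (Relation.TransGen.single (r_to_gen hsupp hirr hsym h3 (by omega)))
  · exact Relation.TransGen.single (r_to_gen hsupp hirr hsym hr hnb)

lemma gen_to_r {n : ℕ} {r : ℤ → ℤ → Prop}
    {a b : ℤ} (h : fischerGen (P0 n r) a b) : r a b := by
  rcases h with ⟨i, j, hm, hab⟩ | ⟨i, j, hm, hab⟩ | ⟨i, j, hm, hab⟩ |
    ⟨i, hm, hab⟩ | ⟨i, hm, hab⟩ <;> rcases hab with ⟨rfl, rfl⟩ | ⟨rfl, rfl⟩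
  · exact hm.2 _ _ (iota_natAbs i) (iota_natAbs j) (by rw [fvec_iota, fvec_iota])
  · refine hm.2 _ _ (neg_iota_natAbs j) (neg_iota_natAbs i) ?_
    rw [fvec_neg_iota, fvec_neg_iota]; abel
  · refine hm.2 _ _ (iota_natAbs i) (neg_iota_natAbs j) ?_
    rw [fvec_neg_iota, fvec_iota]; abel
  · refine hm.2 _ _ (iota_natAbs j) (neg_iota_natAbs i) ?_
    rw [fvec_neg_iota, fvec_iota]
  · refine hm.2 _ _ (neg_iota_natAbs i) (iota_natAbs j) ?_
    rw [fvec_neg_iota, fvec_iota]; abel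
  · refine hm.2 _ _ (neg_iota_natAbs j) (iota_natAbs i) ?_
    rw [fvec_neg_iota, fvec_iota]; abel
  · refine hm.2 _ _ (iota_natAbs i) (by simp) ?_
    rw [fvec_zero, fvec_iota]; abel
  · refine hm.2 _ _ (by simp) (neg_iota_natAbs i) ?_
    rw [fvec_neg_iota, fvec_zero]; abel
  · refine hm.2 _ _ (neg_iota_natAbs i) (by simp) ?_
    rw [fvec_neg_iota, fvec_zero]; abel
  · refine hm.2 _ _ (by simp) (iota_natAbs i) ?_
    rw [fvec_iota, fvec_zero]; abel

lemma flt_to_r {n : ℕ} {r : ℤ → ℤ → Prop}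
    (htrans : ∀ a b c, r a b → r b c → r a c)
    {a b : ℤ} (h : flt (P0 n r) a b) : r a b := by
  induction h with
  | single h1 => exact gen_to_r h1
  | tail h1 h2 ih => exact htrans _ _ _ ih (gen_to_r h2)

lemma gen_negsym {n : ℕ} {P : Set (Fin n → ℝ)} {a b : ℤ}
    (h : fischerGen P a b) : fischerGen P (-b) (-a) := by
  rcases h with ⟨i, j, hm, ⟨rfl, rfl⟩ | ⟨rfl, rfl⟩⟩ | ⟨i, j, hm, ⟨rfl, rfl⟩ | ⟨rfl, rfl⟩⟩ |
    ⟨i, j, hm, ⟨rfl, rfl⟩ | ⟨rfl, rfl⟩⟩ | ⟨i, hm, ⟨rfl, rfl⟩ | ⟨rfl, rfl⟩⟩ |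
    ⟨i, hm, ⟨rfl, rfl⟩ | ⟨rfl, rfl⟩⟩
  · exact Or.inl ⟨i, j, hm, Or.inr ⟨rfl, rfl⟩⟩
  · exact Or.inl ⟨i, j, hm, Or.inl ⟨by rw [neg_neg], by rw [neg_neg]⟩⟩
  · exact Or.inr (Or.inl ⟨i, j, hm, Or.inr ⟨by rw [neg_neg], rfl⟩⟩)
  · exact Or.inr (Or.inl ⟨i, j, hm, Or.inl ⟨by rw [neg_neg], rfl⟩⟩)
  · exact Or.inr (Or.inr (Or.inl ⟨i, j, hm, Or.inr ⟨rfl, by rw [neg_neg]⟩⟩))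
  · exact Or.inr (Or.inr (Or.inl ⟨i, j, hm, Or.inl ⟨rfl, by rw [neg_neg]⟩⟩))
  · exact Or.inr (Or.inr (Or.inr (Or.inl ⟨i, hm, Or.inr ⟨by rw [neg_zero], rfl⟩⟩)))
  · exact Or.inr (Or.inr (Or.inr (Or.inl ⟨i, hm, Or.inl ⟨by rw [neg_neg], by rw [neg_zero]⟩⟩)))
  · exact Or.inr (Or.inr (Or.inr (Or.inr ⟨i, hm, Or.inr ⟨by rw [neg_zero], by rw [neg_neg]⟩⟩)))
  · exact Or.inr (Or.inr (Or.inr (Or.inr ⟨i, hm, Or.inl ⟨rfl, by rw [neg_zero]⟩⟩)))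

lemma flt_negsym {n : ℕ} {P : Set (Fin n → ℝ)} {a b : ℤ}
    (h : flt P a b) : flt P (-b) (-a) := by
  induction h with
  | single h1 => exact Relation.TransGen.single (gen_negsym h1)
  | tail _ h2 ih => exact Relation.TransGen.head (gen_negsym h2) ih

lemma gen_diff {n : ℕ} {P : Set (Fin n → ℝ)} {a b : ℤ}
    (h : fischerGen P a b) : fvec n b - fvec n a ∈ P := by
  rcases h with ⟨i, j, hm, ⟨rfl, rfl⟩ | ⟨rfl, rfl⟩⟩ | ⟨i, j, hm, ⟨rfl, rfl⟩ | ⟨rfl, rfl⟩⟩ |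
    ⟨i, j, hm, ⟨rfl, rfl⟩ | ⟨rfl, rfl⟩⟩ | ⟨i, hm, ⟨rfl, rfl⟩ | ⟨rfl, rfl⟩⟩ |
    ⟨i, hm, ⟨rfl, rfl⟩ | ⟨rfl, rfl⟩⟩
  · rw [fvec_iota, fvec_iota]; exact hm
  · rw [fvec_neg_iota, fvec_neg_iota, show -ee n i - -ee n j = ee n j - ee n i by abel]
    exact hm
  · rw [fvec_neg_iota, fvec_iota, show -ee n j - ee n i = -ee n i - ee n j by abel]
    exact hm
  · rw [fvec_neg_iota, fvec_iota]; exact hm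
  · rw [fvec_neg_iota, fvec_iota, show ee n j - -ee n i = ee n i + ee n j by abel]
    exact hm
  · rw [fvec_neg_iota, fvec_iota, show ee n i - -ee n j = ee n i + ee n j by abel]
    exact hm
  · rw [fvec_zero, fvec_iota, show (0 : Fin n → ℝ) - ee n i = -ee n i by abel]
    exact hm
  · rw [fvec_neg_iota, fvec_zero, show -ee n i - (0 : Fin n → ℝ) = -ee n i by abel]
    exact hm
  · rw [fvec_neg_iota, fvec_zero, show (0 : Fin n → ℝ) - -ee n i = ee n i by abel]
    exact hm
  · rw [fvec_iota, fvec_zero, show ee n i - (0 : Fin n → ℝ) = ee n i by abel]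
    exact hm

lemma flt_diff {n : ℕ} {P : Set (Fin n → ℝ)} {a b : ℤ}
    (h : flt P a b) : fvec n b - fvec n a ∈ PLC P := by
  induction h with
  | single h1 => exact PLC_mem (gen_diff h1)
  | @tail u c _ h2 ih =>
    have := PLC_add ih (PLC_mem (gen_diff h2))
    rwa [show fvec n u - fvec n a + (fvec n c - fvec n u) = fvec n c - fvec n a by abel]
      at this
end Stmt14Aux

open Stmt14Aux

/-- a (strict) partial order `r` on `[-n, n]` is the Fischer
representation of some signed poset on `[n]` iff `i < j ⟺ -j < -i` and
`-i < i ⟹ -i < 0 < i`. -/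
theorem stmt14 (n : ℕ) (r : ℤ → ℤ → Prop)
    (hsupp : ∀ a b, r a b → a.natAbs ≤ n ∧ b.natAbs ≤ n)
    (hirr : ∀ a, ¬ r a a)
    (htrans : ∀ a b c, r a b → r b c → r a c) :
    (∃ P : Set (Fin n → ℝ), IsSignedPoset P ∧ ∀ a b, r a b ↔ flt P a b) ↔
    ((∀ a b : ℤ, a.natAbs ≤ n → b.natAbs ≤ n → (r a b ↔ r (-b) (-a))) ∧
     (∀ a : ℤ, a.natAbs ≤ n → r (-a) a → r (-a) 0 ∧ r 0 a)) := by
  constructor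
  · rintro ⟨P, hP, hflt⟩
    constructor
    · intro a b _ _
      constructor
      · intro h
        exact (hflt _ _).mpr (flt_negsym ((hflt _ _).mp h))
      · intro h
        have h2 := flt_negsym ((hflt _ _).mp h)
        simp only [neg_neg] at h2
        exact (hflt _ _).mpr h2
    · intro a ha hra
      have ha0 : a ≠ 0 := by rintro rfl; exact hirr 0 (by simpa using hra)
      have hfa : fvec n a ∈ PLC P := by
        have h1 := flt_diff ((hflt _ _).mp hra)
        have h2 : fvec n a - fvec n (-a) = (2:ℝ) • fvec n a := by
          rw [fvec_neg, two_smul]; abel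
        rw [h2] at h1
        have h3 := PLC_smul (by norm_num : (0:ℝ) < 1/2) h1
        rwa [smul_smul, show (1/2 : ℝ) * 2 = 1 by norm_num, one_smul] at h3
      rcases lt_trichotomy a 0 with hA | hA | hA
      · obtain ⟨i, hi⟩ := exists_iota (n := n) (a := -a) (by omega) (by omega)
        have haeq : a = -iota i := by rw [← hi, neg_neg]
        have hBn : fvec n a ∈ Bn n := by
          rw [haeq, fvec_neg_iota]; exact neg_ee_mem_Bn i
        have hmem := hP.2.2 _ hBn hfa
        rw [haeq, fvec_neg_iota] at hmem
        constructor
        · refine (hflt _ _).mpr (Relation.TransGen.single ?_)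
          exact Or.inr (Or.inr (Or.inr (Or.inl ⟨i, hmem, Or.inl ⟨hi, rfl⟩⟩)))
        · refine (hflt _ _).mpr (Relation.TransGen.single ?_)
          exact Or.inr (Or.inr (Or.inr (Or.inl ⟨i, hmem, Or.inr ⟨rfl, haeq⟩⟩)))
      · omega
      · obtain ⟨i, hi⟩ := exists_iota (n := n) (a := a) (by omega) ha
        have hBn : fvec n a ∈ Bn n := by
          rw [hi, fvec_iota]; exact ee_mem_Bn i
        have hmem := hP.2.2 _ hBn hfa
        rw [hi, fvec_iota] at hmem
        constructor
        · refine (hflt _ _).mpr (Relation.TransGen.single ?_)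
          exact Or.inr (Or.inr (Or.inr (Or.inr ⟨i, hmem, Or.inl ⟨by rw [hi], rfl⟩⟩)))
        · refine (hflt _ _).mpr (Relation.TransGen.single ?_)
          exact Or.inr (Or.inr (Or.inr (Or.inr ⟨i, hmem, Or.inr ⟨rfl, hi⟩⟩)))
  · rintro ⟨hsym, hmid⟩
    exact ⟨P0 n r, ⟨fun α hα => hα.1, P0_antisym hirr htrans,
      P0_plc_closed hsupp htrans hsym hmid⟩, fun a b =>
      ⟨fun h => r_to_flt hsupp hirr hsym hmid h, fun h => flt_to_r htrans h⟩⟩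
end
end
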